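/- arXiv:1910.02473 — 3 statements merged into one kernel-verified Lean document; each statement's English description precedes it below -/
import Mathlib

section
/- Let F be a field of characteristic not 2, and let φ and γ be anisotropic Pfister forms over F (of fold m and n respectively) with pure subforms φ' and γ'. Then φ and γ share a common quadratic splitting field if and only if the quadratic form γ' ⊥ (-1)·φ' is isotropic over F. -/
open Polynomial QuadraticMap

/-- The Pfister form `⟨⟨a₁,…,aₘ⟩⟩` as a diagonal form indexed by subsets of `{1,…,m}`. -/
noncomputable def pfisterForm (K : Type*) [CommRing K] {m : ℕ} (a : Fin m → K) :
    QuadraticMap K (Finset (Fin m) → K) K :=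
  weightedSumSquares K (fun S : Finset (Fin m) => ∏ i ∈ S, (-a i))

/-- The diagonal coefficients of the pure subform `φ'` (nonempty subsets). -/
def pfisterPureCoeff (K : Type*) [CommRing K] {m : ℕ} (a : Fin m → K) :
    {S : Finset (Fin m) // S.Nonempty} → K :=
  fun S => ∏ i ∈ S.1, (-a i)

/-- A quadratic form on `ι → K` is hyperbolic if it is equivalent to
`⟨1, -1⟩ ⊥ ⋯ ⊥ ⟨1, -1⟩`. -/
noncomputable def IsHyperbolic {K ι : Type*} [CommRing K] [Fintype ι]
    (q : QuadraticMap K (ι → K) K) : Prop :=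
  ∃ k : ℕ, QuadraticMap.Equivalent q
    (weightedSumSquares K (Sum.elim (fun _ : Fin k => (1 : K)) (fun _ : Fin k => (-1 : K))))

namespace PfAux


variable {F : Type*} [Field F] {V V₁ V₂ V₃ : Type*}
  [AddCommGroup V] [Module F V] [AddCommGroup V₁] [Module F V₁]
  [AddCommGroup V₂] [Module F V₂] [AddCommGroup V₃] [Module F V₃]

/-- The one-dimensional diagonal form `⟨s⟩`. -/
noncomputable def sq1 (s : F) : QuadraticForm F F := s • QuadraticMap.sq

@[simp] lemma sq1_apply (s x : F) : sq1 s x = s * (x * x) := rfl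

lemma QF_add (Q : QuadraticForm F V) (x y : V) :
    Q (x + y) = Q x + Q y + polar Q x y := by
  simp [QuadraticMap.polar]

lemma QF_sub (Q : QuadraticForm F V) (x y : V) :
    Q (x - y) = Q x + Q y - polar Q x y := by
  have h := QF_add Q (x - y) y
  simp only [sub_add_cancel] at h
  rw [polar_sub_left, polar_self, two_nsmul] at h
  rw [h]; ring

lemma QF_smul (Q : QuadraticForm F V) (a : F) (x : V) : Q (a • x) = a * a * Q x := by
  rw [QuadraticMap.map_smul, smul_eq_mul]

lemma polar_map_isom {Q₁ : QuadraticForm F V₁} {Q₂ : QuadraticForm F V₂}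
    (f : Q₁.IsometryEquiv Q₂) (x y : V₁) : polar Q₂ (f x) (f y) = polar Q₁ x y := by
  simp only [QuadraticMap.polar, ← map_add, f.map_app]

/-- Reflection in a vector `v` with `Q v ≠ 0`. -/
noncomputable def reflLM (Q : QuadraticForm F V) (v : V) : V →ₗ[F] V :=
  LinearMap.id - (((Q v)⁻¹ • ((polarBilin Q).flip v)).smulRight v)

lemma reflLM_apply (Q : QuadraticForm F V) (v x : V) :
    reflLM Q v x = x - ((Q v)⁻¹ * polar Q x v) • v := by
  simp [reflLM, mul_smul]

lemma reflLM_invol (Q : QuadraticForm F V) {v : V} (hv : Q v ≠ 0) (x : V) :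
    reflLM Q v (reflLM Q v x) = x := by
  simp only [reflLM_apply]
  rw [polar_sub_left, polar_smul_left, polar_self, two_nsmul, smul_eq_mul]
  have h : (Q v)⁻¹ * (polar Q x v - (Q v)⁻¹ * polar Q x v * (Q v + Q v)) =
      -((Q v)⁻¹ * polar Q x v) := by field_simp; ring
  rw [h]
  module

noncomputable def reflect (Q : QuadraticForm F V) (v : V) (hv : Q v ≠ 0) :
    Q.IsometryEquiv Q where
  __ := (LinearEquiv.ofLinear (reflLM Q v) (reflLM Q v)
        (LinearMap.ext (reflLM_invol Q hv)) (LinearMap.ext (reflLM_invol Q hv)) : V ≃ₗ[F] V)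
  map_app' := by
    intro x
    show Q (reflLM Q v x) = Q x
    rw [reflLM_apply, QF_sub, QF_smul, polar_smul_right, polar_comm, smul_eq_mul]
    field_simp
    ring

lemma reflect_apply (Q : QuadraticForm F V) (v : V) (hv : Q v ≠ 0) (x : V) :
    reflect Q v hv x = x - ((Q v)⁻¹ * polar Q x v) • v := reflLM_apply Q v x

lemma exists_isometryEquiv_apply_eq (Q : QuadraticForm F V) (h2 : (2:F) ≠ 0) {u v : V}
    (huv : Q u = Q v) (hv : Q v ≠ 0) : ∃ f : Q.IsometryEquiv Q, f u = v := by
  by_cases h : Q (u - v) ≠ 0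
  · refine ⟨reflect Q (u - v) h, ?_⟩
    rw [reflect_apply]
    have hps : polar Q u (u - v) = Q (u - v) := by
      rw [polar_sub_right, polar_self, QF_sub, huv, two_nsmul]
    rw [hps, inv_mul_cancel₀ h]
    module
  · push_neg at h
    have hpol : polar Q u v = 2 * Q v := by
      have hs := QF_sub Q u v
      rw [h, huv] at hs
      linear_combination hs
    have hsum : Q (u + v) = 4 * Q v := by
      rw [QF_add, huv, hpol]; ring
    have h4 : Q (u + v) ≠ 0 := by
      rw [hsum, show (4:F) = 2*2 by norm_num]
      exact mul_ne_zero (mul_ne_zero h2 h2) hv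
    refine ⟨(reflect Q (u+v) h4).trans (reflect Q v hv), ?_⟩
    have h1 : reflect Q (u+v) h4 u = -v := by
      rw [reflect_apply]
      have hp2 : polar Q u (u + v) = Q (u + v) := by
        rw [polar_add_right, polar_self, two_nsmul, huv, hpol, hsum]; ring
      rw [hp2, inv_mul_cancel₀ h4]
      module
    show (reflect Q v hv) ((reflect Q (u+v) h4) u) = v
    rw [h1, reflect_apply, polar_neg_left, polar_self, two_nsmul]
    have : (Q v)⁻¹ * -(Q v + Q v) = -2 := by field_simp; ring
    rw [this]
    module



lemma polar_sq1 (s a b : F) : polar (sq1 s) a b = 2 * s * (a * b) := by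
  simp [QuadraticMap.polar]; ring

private lemma fst_zero_aux {Q₁ : QuadraticForm F V₁} {Q₂ : QuadraticForm F V₂} {s : F}
    (hs : s ≠ 0) (h2 : (2:F) ≠ 0)
    (h'' : ((sq1 s).prod Q₁).IsometryEquiv ((sq1 s).prod Q₂))
    (hone : h'' (1,0) = (1,0)) (x : V₁) : (h'' (0, x)).1 = 0 := by
  have hp := polar_map_isom h'' (0, x) (1, 0)
  rw [hone] at hp
  simp only [polar_prod, polar_sq1, polar_zero_right, polar_zero_left, add_zero] at hp
  have h4 : 2 * s * ((h'' (0,x)).1 * 1) = 0 := by rw [hp]; try ring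
  rw [mul_one] at h4
  rcases mul_eq_zero.mp h4 with h5 | h5
  · exact absurd h5 (mul_ne_zero h2 hs)
  · exact h5

/-- Witt cancellation of a single diagonal entry. -/
theorem cancel_one {s : F} (hs : s ≠ 0) (h2 : (2:F) ≠ 0)
    {Q₁ : QuadraticForm F V₁} {Q₂ : QuadraticForm F V₂}
    (h : ((sq1 s).prod Q₁).Equivalent ((sq1 s).prod Q₂)) : Q₁.Equivalent Q₂ := by
  obtain ⟨f⟩ := h
  have hval : ((sq1 s).prod Q₂) (f (1, 0)) = ((sq1 s).prod Q₂) (1, 0) := by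
    rw [f.map_app]
    simp [QuadraticMap.prod_apply]
  have hvne : ((sq1 s).prod Q₂) ((1:F), (0:V₂)) ≠ 0 := by
    simpa [QuadraticMap.prod_apply] using hs
  obtain ⟨g, hg⟩ := exists_isometryEquiv_apply_eq ((sq1 s).prod Q₂) h2 hval hvne
  set h' := f.trans g with hh'
  have h'one : h' (1, 0) = (1, 0) := hg
  have h'symmone : h'.symm (1, 0) = (1, 0) := by
    rw [← h'one]
    exact h'.toLinearEquiv.symm_apply_apply _
  have key₁ : ∀ x : V₁, h' (0, x) = (0, (h' (0, x)).2) := fun x =>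
    Prod.ext (fst_zero_aux hs h2 h' h'one x) rfl
  have key₂ : ∀ y : V₂, h'.symm (0, y) = (0, (h'.symm (0, y)).2) := fun y =>
    Prod.ext (fst_zero_aux hs h2 h'.symm h'symmone y) rfl
  let e₁ : V₁ →ₗ[F] V₂ := (LinearMap.snd F F V₂).comp
    ((h'.toLinearEquiv : (F × V₁) →ₗ[F] (F × V₂)).comp (LinearMap.inr F F V₁))
  let e₂ : V₂ →ₗ[F] V₁ := (LinearMap.snd F F V₁).comp
    ((h'.toLinearEquiv.symm : (F × V₂) →ₗ[F] (F × V₁)).comp (LinearMap.inr F F V₂))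
  have he₁ : ∀ x : V₁, e₁ x = (h' (0, x)).2 := fun _ => rfl
  have he₂ : ∀ y : V₂, e₂ y = (h'.symm (0, y)).2 := fun _ => rfl
  refine ⟨⟨LinearEquiv.ofLinear e₁ e₂ ?_ ?_, ?_⟩⟩
  · apply LinearMap.ext
    intro y
    show e₁ (e₂ y) = y
    rw [he₂, he₁]
    have : ((0:F), (h'.symm (0, y)).2) = h'.symm (0, y) := (key₂ y).symm
    rw [this]
    have : h' (h'.symm (0, y)) = (0, y) := h'.toLinearEquiv.apply_symm_apply _
    rw [this]
  · apply LinearMap.ext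
    intro x
    show e₂ (e₁ x) = x
    rw [he₁, he₂]
    have : ((0:F), (h' (0, x)).2) = h' (0, x) := (key₁ x).symm
    rw [this]
    have : h'.symm (h' (0, x)) = (0, x) := h'.toLinearEquiv.symm_apply_apply _
    rw [this]
  · intro x
    show Q₂ (e₁ x) = Q₁ x
    have h1 : ((sq1 s).prod Q₂) (h' (0, x)) = Q₁ x := by
      rw [h'.map_app]
      simp [QuadraticMap.prod_apply]
    rw [key₁ x] at h1
    simpa [QuadraticMap.prod_apply, he₁] using h1

/-- Split off two orthogonal non-isotropic vectors from a quadratic form. -/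
theorem split_two (Q : QuadraticForm F V) (h2 : (2:F) ≠ 0) {x y : V}
    (hxy : polar Q x y = 0) (hx : Q x ≠ 0) (hy : Q y ≠ 0) :
    ∃ (W : Submodule F V) (ρ : QuadraticForm F W),
      Q.Equivalent ((sq1 (Q x)).prod ((sq1 (Q y)).prod ρ)) := by
  set flx : V →ₗ[F] F := (polarBilin Q).flip x with hflx
  set fly : V →ₗ[F] F := (polarBilin Q).flip y with hfly
  have hflx_apply : ∀ z, flx z = polar Q z x := fun z => rfl
  have hfly_apply : ∀ z, fly z = polar Q z y := fun z => rfl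
  set cx : V →ₗ[F] F := (2 * Q x)⁻¹ • flx with hcx
  set cy : V →ₗ[F] F := (2 * Q y)⁻¹ • fly with hcy
  have hcx_apply : ∀ z, cx z = (2 * Q x)⁻¹ * polar Q z x := fun z => rfl
  have hcy_apply : ∀ z, cy z = (2 * Q y)⁻¹ * polar Q z y := fun z => rfl
  set W : Submodule F V := (LinearMap.ker flx) ⊓ (LinearMap.ker fly) with hW
  set pr : V →ₗ[F] V := LinearMap.id - cx.smulRight x - cy.smulRight y with hpr
  have hpr_apply : ∀ z, pr z = z - cx z • x - cy z • y := fun z => rfl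
  have hprW : ∀ z, pr z ∈ W := by
    intro z
    have hxx : polar Q (pr z) x = 0 := by
      rw [hpr_apply, polar_sub_left, polar_sub_left, polar_smul_left, polar_smul_left,
        polar_self, hcx_apply, hcy_apply, polar_comm Q y x, hxy, two_nsmul, smul_eq_mul,
        smul_eq_mul]
      field_simp
      ring
    have hyy : polar Q (pr z) y = 0 := by
      rw [hpr_apply, polar_sub_left, polar_sub_left, polar_smul_left, polar_smul_left,
        polar_self, hcx_apply, hcy_apply, hxy, two_nsmul, smul_eq_mul, smul_eq_mul]
      field_simp
      ring
    exact Submodule.mem_inf.mpr ⟨LinearMap.mem_ker.mpr hxx, LinearMap.mem_ker.mpr hyy⟩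
  have hWx : ∀ w : V, w ∈ W → polar Q w x = 0 := by
    intro w hw
    exact LinearMap.mem_ker.mp (Submodule.mem_inf.mp hw).1
  have hWy : ∀ w : V, w ∈ W → polar Q w y = 0 := by
    intro w hw
    exact LinearMap.mem_ker.mp (Submodule.mem_inf.mp hw).2
  set fwd : V →ₗ[F] F × (F × W) := LinearMap.prod cx (LinearMap.prod cy
    (pr.codRestrict W hprW)) with hfwd
  set bwd : F × (F × W) →ₗ[F] V := LinearMap.coprod (LinearMap.toSpanSingleton F V x)
    (LinearMap.coprod (LinearMap.toSpanSingleton F V y) W.subtype) with hbwd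
  have hcxx : cx x = 1 := by
    rw [hcx_apply, polar_self, two_nsmul]
    field_simp; ring
  have hcxy : cx y = 0 := by
    rw [hcx_apply, polar_comm, hxy]; ring
  have hcyx : cy x = 0 := by
    rw [hcy_apply, hxy]; ring
  have hcyy : cy y = 1 := by
    rw [hcy_apply, polar_self, two_nsmul]
    field_simp; ring
  have hleft : bwd.comp fwd = LinearMap.id := by
    apply LinearMap.ext
    intro z
    show cx z • x + (cy z • y + pr z) = z
    rw [hpr_apply]
    abel
  have hright : fwd.comp bwd = LinearMap.id := by
    apply LinearMap.ext
    rintro ⟨a, b, w⟩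
    have hb : bwd (a, b, w) = a • x + (b • y + (w : V)) := rfl
    have h1 : cx (bwd (a, b, w)) = a := by
      rw [hb]
      rw [map_add, map_add, LinearMap.map_smul, LinearMap.map_smul, hcxx, hcxy]
      have : cx (w : V) = 0 := by
        rw [hcx_apply, hWx w w.2]; ring
      rw [this]
      simp
    have h2' : cy (bwd (a, b, w)) = b := by
      rw [hb]
      rw [map_add, map_add, LinearMap.map_smul, LinearMap.map_smul, hcyx, hcyy]
      have : cy (w : V) = 0 := by
        rw [hcy_apply, hWy w w.2]; ring
      rw [this]
      simp
    have h3 : pr (bwd (a, b, w)) = (w : V) := by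
      rw [hpr_apply, h1, h2', hb]
      abel
    show (cx (bwd (a,b,w)), cy (bwd (a,b,w)), pr.codRestrict W hprW (bwd (a,b,w))) = (a, b, w)
    refine Prod.ext h1 (Prod.ext h2' ?_)
    apply Subtype.ext
    exact h3
  refine ⟨W, Q.comp W.subtype, ⟨⟨LinearEquiv.ofLinear fwd bwd hright hleft, ?_⟩⟩⟩
  intro z
  show Q x * (cx z * cx z) + (Q y * (cy z * cy z) + Q (pr z)) = Q z
  have hpx : polar Q x (pr z) = 0 := by rw [polar_comm]; exact hWx _ (hprW z)
  have hpy : polar Q y (pr z) = 0 := by rw [polar_comm]; exact hWy _ (hprW z)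
  have hz : z = cx z • x + (cy z • y + pr z) := by
    rw [hpr_apply]; abel
  conv_rhs => rw [hz]
  rw [QF_add, QF_add, polar_add_right]
  simp only [QF_smul, polar_smul_left, polar_smul_right, smul_eq_mul, hxy, hpx, hpy,
    mul_zero, add_zero]
  ring

section DQ

variable {ι ι₁ ι₂ : Type*} [Fintype ι] [Fintype ι₁] [Fintype ι₂]

lemma wSS_apply (w : ι → F) (v : ι → F) :
    weightedSumSquares F w v = ∑ i : ι, w i * (v i * v i) := by
  rw [weightedSumSquares_apply]
  simp [smul_eq_mul]

/-- Reindexing a weighted sum of squares. -/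
noncomputable def reindexIsom (w : ι → F) (e : ι₁ ≃ ι) :
    (weightedSumSquares F w).IsometryEquiv (weightedSumSquares F (w ∘ e)) where
  __ := LinearEquiv.funCongrLeft F F e
  map_app' := by
    intro v
    show weightedSumSquares F (w ∘ e) (v ∘ e) = weightedSumSquares F w v
    rw [wSS_apply, wSS_apply]
    exact Equiv.sum_comp e (fun i => w i * (v i * v i))

/-- Splitting a weighted sum of squares indexed by a sum type. -/
noncomputable def sumElimIsom (w₁ : ι₁ → F) (w₂ : ι₂ → F) :
    (weightedSumSquares F (Sum.elim w₁ w₂)).IsometryEquiv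
      ((weightedSumSquares F w₁).prod (weightedSumSquares F w₂)) where
  __ := LinearEquiv.sumArrowLequivProdArrow ι₁ ι₂ F F
  map_app' := by
    intro v
    show (weightedSumSquares F w₁) (fun i => v (Sum.inl i)) +
      (weightedSumSquares F w₂) (fun i => v (Sum.inr i)) =
      weightedSumSquares F (Sum.elim w₁ w₂) v
    rw [wSS_apply, wSS_apply, wSS_apply, Fintype.sum_sum_type]
    rfl

/-- A weighted sum of squares over `Unit`. -/
noncomputable def unitIsom (w : Unit → F) :
    (weightedSumSquares F w).IsometryEquiv (sq1 (w ())) where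
  __ := LinearEquiv.funUnique Unit F F
  map_app' := by
    intro v
    show w () * (v () * v ()) = weightedSumSquares F w v
    rw [wSS_apply]
    simp

lemma smul_wSS (c : F) (w : ι → F) :
    c • weightedSumSquares F w = weightedSumSquares F (fun i => c * w i) := by
  ext v
  rw [QuadraticMap.smul_apply, wSS_apply, wSS_apply, smul_eq_mul, Finset.mul_sum]
  congr 1
  funext i
  ring

lemma smul_sq1 (c s : F) : c • sq1 s = sq1 (c * s) := by
  ext v
  simp [QuadraticMap.smul_apply, smul_eq_mul]
  ring

lemma sq1_congr {s t : F} (h : s = t) : sq1 s = sq1 t := by rw [h]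

/-- Scaling by a square is an isometry. -/
noncomputable def sqScaleIsom (Q : QuadraticForm F V) {c : F} (hc : c ≠ 0) :
    ((c * c) • Q).IsometryEquiv Q where
  __ := LinearEquiv.smulOfUnit (M := V) (Units.mk0 c hc)
  map_app' := by
    intro v
    show Q (c • v) = ((c * c) • Q) v
    rw [QF_smul, QuadraticMap.smul_apply, smul_eq_mul]

lemma Equivalent.smul' {Q₁ : QuadraticForm F V₁} {Q₂ : QuadraticForm F V₂} (c : F)
    (h : Q₁.Equivalent Q₂) : (c • Q₁).Equivalent (c • Q₂) := by
  obtain ⟨f⟩ := h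
  exact ⟨⟨f.toLinearEquiv, fun m => by
    rw [QuadraticMap.smul_apply, QuadraticMap.smul_apply]
    congr 1
    exact f.map_app m⟩⟩

noncomputable def prodAssocIsom (Q₁ : QuadraticForm F V₁) (Q₂ : QuadraticForm F V₂)
    (Q₃ : QuadraticForm F V₃) :
    ((Q₁.prod Q₂).prod Q₃).IsometryEquiv (Q₁.prod (Q₂.prod Q₃)) where
  __ := LinearEquiv.prodAssoc F V₁ V₂ V₃
  map_app' := by
    rintro ⟨⟨x, y⟩, z⟩
    show Q₁ x + (Q₂ y + Q₃ z) = Q₁ x + Q₂ y + Q₃ z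
    ring

lemma anisotropic_of_equivalent {Q₁ : QuadraticForm F V₁} {Q₂ : QuadraticForm F V₂}
    (h : Q₁.Equivalent Q₂) (ha : Q₂.Anisotropic) : Q₁.Anisotropic := by
  obtain ⟨f⟩ := h
  intro x hx
  have : Q₂ (f x) = 0 := by rw [f.map_app]; exact hx
  have := ha _ this
  simpa using (EmbeddingLike.map_eq_zero_iff).mp this

lemma not_anisotropic_of_equivalent {Q₁ : QuadraticForm F V₁} {Q₂ : QuadraticForm F V₂}
    (h : Q₁.Equivalent Q₂) (ha : ¬ Q₁.Anisotropic) : ¬ Q₂.Anisotropic :=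
  fun h2 => ha (anisotropic_of_equivalent h h2)

end DQ

section Hyp

variable {ι ι₁ ι₂ : Type*} [Fintype ι] [Fintype ι₁] [Fintype ι₂]

/-- The hyperbolic plane `⟨w, -w⟩` is equivalent to `⟨1, -1⟩`. -/
noncomputable def hyp2Isom {w : F} (hw : w ≠ 0) (h2 : (2:F) ≠ 0) :
    ((sq1 w).prod (sq1 (-w))).IsometryEquiv ((sq1 (1:F)).prod (sq1 (-1:F))) where
  toFun p := ((w*(p.1+p.2)+(p.1-p.2))/2, (w*(p.1+p.2)-(p.1-p.2))/2)
  invFun q := (((q.1+q.2)/w + (q.1-q.2))/2, ((q.1+q.2)/w - (q.1-q.2))/2)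
  map_add' p q := by
    apply Prod.ext <;> (show _ = _ + _) <;>
      (simp only [Prod.fst_add, Prod.snd_add]; ring)
  map_smul' c p := by
    apply Prod.ext <;> (simp only [Prod.smul_fst, Prod.smul_snd, smul_eq_mul,
      RingHom.id_apply]; ring)
  left_inv p := by
    apply Prod.ext <;> (simp only []; field_simp; ring)
  right_inv q := by
    apply Prod.ext <;> (simp only []; field_simp; ring)
  map_app' p := by
    show (1:F) * _ + (-1:F) * _ = w * (p.1 * p.1) + (-w) * (p.2 * p.2)
    simp only [LinearMap.fst_apply, LinearMap.snd_apply, QuadraticMap.sq_apply]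
    field_simp
    ring

/-- `(ι ⊕ ι → F) ≃ₗ[F] (ι → F × F)`. -/
def sumArrowPairEquiv (ι : Type*) : ((ι ⊕ ι) → F) ≃ₗ[F] (ι → F × F) where
  toFun x i := (x (Sum.inl i), x (Sum.inr i))
  invFun y := Sum.elim (fun i => (y i).1) (fun i => (y i).2)
  map_add' x y := rfl
  map_smul' c x := rfl
  left_inv x := by funext s; cases s <;> rfl
  right_inv y := by funext i; rfl

noncomputable def sumElimPiIsom (u v : ι → F) :
    (weightedSumSquares F (Sum.elim u v)).IsometryEquiv
      (QuadraticMap.pi (fun i => (sq1 (u i)).prod (sq1 (v i)))) where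
  __ := sumArrowPairEquiv (F := F) ι
  map_app' := by
    intro x
    rw [QuadraticMap.pi_apply, wSS_apply, Fintype.sum_sum_type, ← Finset.sum_add_distrib]
    rfl

lemma hyp_pairs (u : ι → F) (hu : ∀ i, u i ≠ 0) (h2 : (2:F) ≠ 0) :
    (weightedSumSquares F (Sum.elim u (fun i => - u i))).Equivalent
      (weightedSumSquares F (Sum.elim (fun _ : ι => (1:F)) (fun _ : ι => (-1:F)))) :=
  ⟨((sumElimPiIsom u (fun i => - u i)).trans
      (IsometryEquiv.pi (fun i => hyp2Isom (hu i) h2))).trans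
    (sumElimPiIsom (fun _ : ι => (1:F)) (fun _ : ι => (-1:F))).symm⟩

/-- A quadratic form is hyperbolic. -/
def Hyp (Q : QuadraticForm F V) : Prop :=
  ∃ k : ℕ, Q.Equivalent (weightedSumSquares F
    (Sum.elim (fun _ : Fin k => (1:F)) (fun _ : Fin k => (-1:F))))

lemma hyp_congr {Q₁ : QuadraticForm F V₁} {Q₂ : QuadraticForm F V₂}
    (h : Q₁.Equivalent Q₂) : Hyp Q₂ → Hyp Q₁ := fun ⟨k, hk⟩ => ⟨k, h.trans hk⟩

lemma hyp_sum_elim_neg (u : ι → F) (hu : ∀ i, u i ≠ 0) (h2 : (2:F) ≠ 0) :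
    Hyp (weightedSumSquares F (Sum.elim u (fun i => - u i))) := by
  refine ⟨Fintype.card ι, ?_⟩
  refine (hyp_pairs u hu h2).trans ?_
  have e := (Fintype.equivFin ι).symm
  have hiso := reindexIsom (F := F) (Sum.elim (fun _ : ι => (1:F)) (fun _ : ι => (-1:F)))
    (Equiv.sumCongr e e)
  have hw : (Sum.elim (fun _ : ι => (1:F)) (fun _ : ι => (-1:F))) ∘ (Equiv.sumCongr e e)
      = Sum.elim (fun _ : Fin (Fintype.card ι) => (1:F)) (fun _ => (-1:F)) := by
    funext s; rcases s with s | s <;> rfl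
  rw [hw] at hiso
  exact ⟨hiso⟩

lemma hyp_smul {Q : QuadraticForm F V} (h : Hyp Q) {c : F} (hc : c ≠ 0) (h2 : (2:F) ≠ 0) :
    Hyp (c • Q) := by
  obtain ⟨k, hk⟩ := h
  have h1 := Equivalent.smul' c hk
  rw [smul_wSS] at h1
  have hw : (fun i => c * (Sum.elim (fun _ : Fin k => (1:F)) (fun _ => (-1:F))) i)
      = Sum.elim (fun _ : Fin k => c) (fun i => - (fun _ : Fin k => c) i) := by
    funext s; rcases s with s | s <;> simp
  rw [hw] at h1
  exact hyp_congr h1 (hyp_sum_elim_neg _ (fun _ => hc) h2)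

lemma hyp_prod {Q₁ : QuadraticForm F V₁} {Q₂ : QuadraticForm F V₂}
    (h₁ : Hyp Q₁) (h₂ : Hyp Q₂) : Hyp (Q₁.prod Q₂) := by
  obtain ⟨k₁, hk₁⟩ := h₁
  obtain ⟨k₂, hk₂⟩ := h₂
  refine ⟨k₁ + k₂, ?_⟩
  refine (QuadraticMap.Equivalent.prod hk₁ hk₂).trans ?_
  refine (QuadraticMap.Equivalent.symm ⟨sumElimIsom _ _⟩).trans ?_
  set E : (Fin (k₁+k₂) ⊕ Fin (k₁+k₂)) ≃ ((Fin k₁ ⊕ Fin k₁) ⊕ (Fin k₂ ⊕ Fin k₂)) :=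
    (Equiv.sumCongr finSumFinEquiv.symm finSumFinEquiv.symm).trans
      (Equiv.sumSumSumComm (Fin k₁) (Fin k₂) (Fin k₁) (Fin k₂)) with hE
  have hiso := reindexIsom (F := F)
    (Sum.elim (Sum.elim (fun _ : Fin k₁ => (1:F)) (fun _ : Fin k₁ => (-1:F)))
      (Sum.elim (fun _ : Fin k₂ => (1:F)) (fun _ : Fin k₂ => (-1:F)))) E
  have hw : (Sum.elim (Sum.elim (fun _ : Fin k₁ => (1:F)) (fun _ : Fin k₁ => (-1:F)))
      (Sum.elim (fun _ : Fin k₂ => (1:F)) (fun _ : Fin k₂ => (-1:F)))) ∘ E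
      = Sum.elim (fun _ : Fin (k₁+k₂) => (1:F)) (fun _ : Fin (k₁+k₂) => (-1:F)) := by
    funext s
    rcases s with s | s <;>
    · rcases h : finSumFinEquiv.symm s with a | b <;>
        simp [hE, Equiv.sumSumSumComm, Equiv.sumAssoc, Equiv.sumComm, h]
  rw [hw] at hiso
  exact ⟨hiso⟩

lemma hyp_not_anisotropic {Q : QuadraticForm F V} (h : Hyp Q) {v₀ : V} (hv₀ : Q v₀ ≠ 0) :
    ¬ Q.Anisotropic := by
  obtain ⟨k, ⟨f⟩⟩ := h
  rcases Nat.eq_zero_or_pos k with hk | hk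
  · subst hk
    exact absurd ((f.map_app v₀).symm.trans (by rw [wSS_apply]; simp)) hv₀
  · intro ha
    set u : (Fin k ⊕ Fin k) → F := fun _ => 1 with hu
    have hQu : weightedSumSquares F
        (Sum.elim (fun _ : Fin k => (1:F)) (fun _ => (-1:F))) u = 0 := by
      rw [wSS_apply, Fintype.sum_sum_type]
      simp [hu]
    have hsymm : f (f.toLinearEquiv.symm u) = u := f.toLinearEquiv.apply_symm_apply u
    have h0 : Q (f.toLinearEquiv.symm u) = 0 := by
      have hm := f.map_app (f.toLinearEquiv.symm u)
      rw [hsymm] at hm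
      rw [← hm, hQu]
    have hz := ha _ h0
    have hu0 : u = 0 := by
      rw [← hsymm, hz, map_zero]
    have h1 := congrFun hu0 (Sum.inl ⟨0, hk⟩)
    simp [hu] at h1

end Hyp

section Bin

/-- The binary relation `⟨s,r⟩ ⊗ ψ ≅ ⟨s+r, sr(s+r)⟩ ⊗ ψ`. -/
noncomputable def binIsom (ψ : QuadraticForm F V) {s r : F} (he : s + r ≠ 0) :
    ((s • ψ).prod (r • ψ)).IsometryEquiv
      (((s + r) • ψ).prod ((s * r * (s + r)) • ψ)) where
  toFun p := ((s + r)⁻¹ • (s • p.1 + r • p.2), (s + r)⁻¹ • (p.1 - p.2))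
  invFun q := (q.1 + r • q.2, q.1 - s • q.2)
  map_add' p q := by
    apply Prod.ext <;> (simp only [Prod.fst_add, Prod.snd_add]) <;> module
  map_smul' c p := by
    apply Prod.ext <;> (simp only [Prod.smul_fst, Prod.smul_snd, RingHom.id_apply]) <;> module
  left_inv p := by
    apply Prod.ext <;> (simp only []) <;> (match_scalars <;> (field_simp; try ring))
  right_inv q := by
    apply Prod.ext <;> (simp only []) <;> (match_scalars <;> (field_simp; try ring))
  map_app' p := by
    show (s + r) • ψ ((s + r)⁻¹ • (s • p.1 + r • p.2)) +
        (s * r * (s + r)) • ψ ((s + r)⁻¹ • (p.1 - p.2)) =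
      s • ψ p.1 + r • ψ p.2
    rw [QF_smul, QF_smul, QF_add, QF_sub, QF_smul, QF_smul, polar_smul_left, polar_smul_right]
    simp only [smul_eq_mul]
    field_simp
    ring

end Bin

section Pfister

variable {m : ℕ}

lemma last_not_mem_map (S : Finset (Fin m)) :
    Fin.last m ∉ S.map Fin.castSuccEmb := by
  simp only [Finset.mem_map, Fin.coe_castSuccEmb]
  rintro ⟨j, hj, hcast⟩
  exact (Fin.castSucc_lt_last j).ne hcast

noncomputable def finsetSuccEquiv (m : ℕ) : (Finset (Fin m) ⊕ Finset (Fin m)) ≃ Finset (Fin (m+1)) where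
  toFun := Sum.elim (fun S => S.map Fin.castSuccEmb)
    (fun S => insert (Fin.last m) (S.map Fin.castSuccEmb))
  invFun T := if Fin.last m ∈ T
    then Sum.inr ((T.erase (Fin.last m)).preimage Fin.castSucc
      (Fin.castSucc_injective m).injOn)
    else Sum.inl (T.preimage Fin.castSucc (Fin.castSucc_injective m).injOn)
  left_inv S := by
    rcases S with S | S
    · show (if Fin.last m ∈ S.map Fin.castSuccEmb then _ else _) = Sum.inl S
      rw [if_neg (last_not_mem_map S)]
      congr 1
      exact Finset.preimage_map Fin.castSuccEmb S
    · show (if Fin.last m ∈ insert (Fin.last m) (S.map Fin.castSuccEmb) then _ else _) = Sum.inr S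
      rw [if_pos (Finset.mem_insert_self _ _)]
      congr 1
      simp only [Sum.elim_inr]
      ext j
      simp only [Finset.mem_preimage, Finset.mem_erase, Finset.mem_insert, Finset.mem_map,
        Fin.coe_castSuccEmb]
      constructor
      · rintro ⟨hne, (h | ⟨a, ha, hc⟩)⟩
        · exact absurd h hne
        · rwa [← (Fin.castSucc_injective m) hc]
      · intro hj
        exact ⟨(Fin.castSucc_lt_last j).ne, Or.inr ⟨j, hj, rfl⟩⟩
  right_inv T := by
    by_cases h : Fin.last m ∈ T
    · simp only [if_pos h, Sum.elim_inr]
      ext x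
      rcases eq_or_ne x (Fin.last m) with rfl | hx
      · simp [h]
      · obtain ⟨j, rfl⟩ := Fin.exists_castSucc_eq.mpr hx
        simp only [Finset.mem_insert, Finset.mem_map, Finset.mem_preimage, Finset.mem_erase,
          Fin.coe_castSuccEmb]
        constructor
        · rintro (hc | ⟨a, ⟨_, ha⟩, hcast⟩)
          · exact absurd hc hx
          · rwa [← hcast]
        · intro hT
          exact Or.inr ⟨j, ⟨hx, hT⟩, rfl⟩
    · simp only [if_neg h, Sum.elim_inl]
      ext x
      rcases eq_or_ne x (Fin.last m) with rfl | hx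
      · simp only [Finset.mem_map, Finset.mem_preimage, Fin.coe_castSuccEmb]
        constructor
        · rintro ⟨a, ha, hc⟩
          exact absurd hc (Fin.castSucc_lt_last a).ne
        · intro hT
          exact absurd hT h
      · obtain ⟨j, rfl⟩ := Fin.exists_castSucc_eq.mpr hx
        simp only [Finset.mem_map, Finset.mem_preimage, Fin.coe_castSuccEmb]
        constructor
        · rintro ⟨a, ha, hcast⟩
          rwa [← hcast]
        · intro hT
          exact ⟨j, hT, rfl⟩

lemma pfister_weights_succ (a : Fin (m+1) → F) :
    (fun S : Finset (Fin (m+1)) => ∏ i ∈ S, (-a i)) ∘ (finsetSuccEquiv m)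
      = Sum.elim (fun S : Finset (Fin m) => ∏ i ∈ S, (-(fun j => a (Fin.castSucc j)) i))
        (fun S : Finset (Fin m) =>
          (-a (Fin.last m)) * ∏ i ∈ S, (-(fun j => a (Fin.castSucc j)) i)) := by
  funext S
  rcases S with S | S
  · show ∏ i ∈ S.map Fin.castSuccEmb, (-a i) = _
    rw [Finset.prod_map]
    rfl
  · show ∏ i ∈ insert (Fin.last m) (S.map Fin.castSuccEmb), (-a i) = _
    rw [Finset.prod_insert (last_not_mem_map S), Finset.prod_map]
    rfl

lemma pfister_succ (a : Fin (m+1) → F) :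
    (pfisterForm F a).Equivalent
      ((pfisterForm F (fun j => a (Fin.castSucc j))).prod
        ((-a (Fin.last m)) • pfisterForm F (fun j => a (Fin.castSucc j)))) := by
  have heq : (-a (Fin.last m)) • pfisterForm F (fun j => a (Fin.castSucc j))
      = weightedSumSquares F (fun S : Finset (Fin m) =>
          (-a (Fin.last m)) * ∏ i ∈ S, (-(fun j => a (Fin.castSucc j)) i)) := smul_wSS _ _
  refine ⟨((reindexIsom _ (finsetSuccEquiv m)).trans ?_)⟩
  rw [pfister_weights_succ, heq]
  exact sumElimIsom _ _

noncomputable def pureEquiv (m : ℕ) : (Unit ⊕ {S : Finset (Fin m) // S.Nonempty}) ≃ Finset (Fin m) where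
  toFun := Sum.elim (fun _ => (∅ : Finset (Fin m))) Subtype.val
  invFun S := if h : S.Nonempty then Sum.inr ⟨S, h⟩ else Sum.inl ()
  left_inv s := by
    rcases s with ⟨⟩ | ⟨S, h⟩
    · simp
    · simp [h]
  right_inv S := by
    by_cases h : S.Nonempty
    · simp [h]
    · simp [h]
      rw [Finset.not_nonempty_iff_eq_empty] at h
      exact h.symm

lemma pfister_pure (a : Fin m → F) :
    (pfisterForm F a).Equivalent ((sq1 (1:F)).prod
      (weightedSumSquares F (pfisterPureCoeff F a))) := by
  have hw : (fun S : Finset (Fin m) => ∏ i ∈ S, (-a i)) ∘ (pureEquiv m)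
      = Sum.elim (fun _ : Unit => (1:F)) (pfisterPureCoeff F a) := by
    funext s
    rcases s with ⟨⟩ | ⟨S, h⟩
    · show ∏ i ∈ (∅ : Finset (Fin m)), (-a i) = 1
      simp
    · rfl
  refine ⟨((reindexIsom _ (pureEquiv m)).trans ?_)⟩
  rw [hw]
  exact (sumElimIsom _ _).trans (QuadraticMap.IsometryEquiv.prod (unitIsom _) (QuadraticMap.IsometryEquiv.refl _))

lemma sq1_anisotropic {s : F} (hs : s ≠ 0) : (sq1 s).Anisotropic := by
  intro x hx
  rw [sq1_apply] at hx
  rcases mul_eq_zero.mp hx with h | h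
  · exact absurd h hs
  · exact mul_self_eq_zero.mp h

lemma pf_coeff_ne (a : Fin m → F) (ha : ∀ i, a i ≠ 0) (S : Finset (Fin m)) :
    (∏ i ∈ S, (-a i)) ≠ 0 :=
  Finset.prod_ne_zero_iff.mpr fun i _ => neg_ne_zero.mpr (ha i)

lemma a_ne_zero_of_anisotropic {a : Fin m → F} (h : (pfisterForm F a).Anisotropic) :
    ∀ i, a i ≠ 0 := by
  intro i hai
  set x : Finset (Fin m) → F := Pi.single {i} 1 with hx
  have hQ : pfisterForm F a x = 0 := by
    show weightedSumSquares F _ x = 0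
    rw [wSS_apply]
    apply Finset.sum_eq_zero
    intro S _
    rcases eq_or_ne S {i} with rfl | hS
    · simp [hx, hai]
    · simp [hx, Pi.single_eq_of_ne hS]
  have h1 := congrFun (h x hQ) ({i} : Finset (Fin m))
  simp [hx] at h1

lemma smul_prod (c : F) (Q₁ : QuadraticForm F V₁) (Q₂ : QuadraticForm F V₂) :
    c • (Q₁.prod Q₂) = (c • Q₁).prod (c • Q₂) := by
  ext p
  simp only [QuadraticMap.smul_apply, QuadraticMap.prod_apply, smul_eq_mul]
  ring

lemma smul_scalar_congr {c d : F} (h : c = d) (Q : QuadraticForm F V) : c • Q = d • Q := by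
  rw [h]

/-- Roundness of Pfister forms: every nonzero represented value is a similarity factor. -/
theorem pfister_round (h2 : (2:F) ≠ 0) :
    ∀ {m : ℕ} (a : Fin m → F), (∀ i, a i ≠ 0) → ∀ {e : F}, e ≠ 0 →
    (∃ x, pfisterForm F a x = e) → (e • pfisterForm F a).Equivalent (pfisterForm F a) := by
  intro m
  induction m with
  | zero =>
    intro a ha e he hex
    obtain ⟨x, hx⟩ := hex
    let equivU : Unit ≃ Finset (Fin 0) := {
      toFun := fun _ => (∅ : Finset (Fin 0))
      invFun := fun _ => ()
      left_inv := fun _ => rfl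
      right_inv := fun S => by
        ext j
        exact j.elim0 }
    have g : (pfisterForm F a).IsometryEquiv (sq1 (1:F)) := by
      have h1 := reindexIsom (F := F) (fun S : Finset (Fin 0) => ∏ i ∈ S, (-a i)) equivU
      have hw : ((fun S : Finset (Fin 0) => ∏ i ∈ S, (-a i)) ∘ equivU)
          = (fun _ : Unit => (1:F)) := by
        funext u
        show ∏ i ∈ (∅ : Finset (Fin 0)), (-a i) = 1
        simp
      rw [hw] at h1
      exact h1.trans (unitIsom _)
    set z := g x with hz
    have hez : e = z * z := by
      have := g.map_app x
      rw [hx, sq1_apply, one_mul] at this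
      exact this.symm
    have hzne : z ≠ 0 := fun h => he (by rw [hez, h, mul_zero])
    have c1 : (e • pfisterForm F a).Equivalent (e • sq1 (1:F)) := Equivalent.smul' e ⟨g⟩
    have c2 : e • sq1 (1:F) = (z * z) • sq1 (1:F) := smul_scalar_congr hez _
    have c3 : ((z * z) • sq1 (1:F)).Equivalent (sq1 (1:F)) := ⟨sqScaleIsom _ hzne⟩
    refine c1.trans ?_
    rw [c2]
    exact c3.trans (QuadraticMap.Equivalent.symm ⟨g⟩)
  | succ m ih =>
    intro a ha e he hex
    obtain ⟨x, hx⟩ := hex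
    have ha' : ∀ i, (fun j => a (Fin.castSucc j)) i ≠ 0 := fun i => ha _
    set t : F := -a (Fin.last m) with ht
    have htne : t ≠ 0 := neg_ne_zero.mpr (ha _)
    set ψ := pfisterForm F (fun j => a (Fin.castSucc j)) with hψ
    obtain ⟨g⟩ := pfister_succ (F := F) a
    set p := ψ (g x).1 with hp'
    set q := ψ (g x).2 with hq'
    have hrep : p + t * q = e := by
      have hm := g.map_app x
      rw [hx] at hm
      rw [QuadraticMap.prod_apply, QuadraticMap.smul_apply, smul_eq_mul] at hm
      exact hm
    have base : (pfisterForm F a).Equivalent (ψ.prod (t • ψ)) := ⟨g⟩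
    by_cases hp : p = 0
    · have hq : t * q = e := by rw [← hrep, hp, zero_add]
      have hqne : q ≠ 0 := by
        intro h
        exact he (by rw [← hq, h, mul_zero])
      have roundq := ih (fun j => a (Fin.castSucc j)) ha' hqne ⟨(g x).2, rfl⟩
      -- e • pf ≅ (e•ψ).prod (e•t•ψ)
      have c1 : (e • ψ).Equivalent (t • ψ) := by
        have h1 : e • ψ = t • (q • ψ) := by
          rw [smul_smul]
          exact smul_scalar_congr (by rw [← hq]) _
        rw [h1]
        exact Equivalent.smul' t roundq
      have c2 : (e • (t • ψ)).Equivalent ψ := by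
        have h1 : e • (t • ψ) = (t * t) • (q • ψ) := by
          rw [smul_smul, smul_smul]
          exact smul_scalar_congr (by rw [← hq]; ring) _
        rw [h1]
        exact (Equivalent.smul' (t*t) roundq).trans ⟨sqScaleIsom ψ htne⟩
      refine (Equivalent.smul' e base).trans ?_ |>.trans base.symm
      rw [smul_prod]
      exact (QuadraticMap.Equivalent.prod c1 c2).trans
        ⟨QuadraticMap.IsometryEquiv.prodComm _ _⟩
    · by_cases hq : q = 0
      · have hpe : p = e := by rw [← hrep, hq]; ring
        have roundp := ih (fun j => a (Fin.castSucc j)) ha' hp ⟨(g x).1, rfl⟩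
        have c1 : (e • ψ).Equivalent ψ := by
          have h1 : e • ψ = p • ψ := smul_scalar_congr hpe.symm ψ
          rw [h1]
          exact roundp
        have c2 : (e • (t • ψ)).Equivalent (t • ψ) := by
          have h1 : e • (t • ψ) = t • (p • ψ) := by
            rw [smul_smul, smul_smul]
            exact smul_scalar_congr (by rw [hpe]; ring) _
          rw [h1]
          exact Equivalent.smul' t roundp
        refine (Equivalent.smul' e base).trans ?_ |>.trans base.symm
        rw [smul_prod]
        exact QuadraticMap.Equivalent.prod c1 c2
      · -- both p and q nonzero
        have roundp := ih (fun j => a (Fin.castSucc j)) ha' hp ⟨(g x).1, rfl⟩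
        have roundq := ih (fun j => a (Fin.castSucc j)) ha' hq ⟨(g x).2, rfl⟩
        have hptq : p + t * q ≠ 0 := by rw [hrep]; exact he
        have c2' : (t • ψ).Equivalent ((t * q) • ψ) := by
          have h1 := (Equivalent.smul' t roundq).symm
          rw [smul_smul] at h1
          exact h1
        have step1 : (ψ.prod (t • ψ)).Equivalent ((p • ψ).prod ((t * q) • ψ)) :=
          QuadraticMap.Equivalent.prod roundp.symm c2'
        have step2 : ((p • ψ).prod ((t * q) • ψ)).Equivalent
            (((p + t * q) • ψ).prod ((p * (t * q) * (p + t * q)) • ψ)) := ⟨binIsom ψ hptq⟩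
        rw [hrep] at step2
        have base2 : (pfisterForm F a).Equivalent
            ((e • ψ).prod ((p * (t * q) * e) • ψ)) := base.trans (step1.trans step2)
        have d1 : (e • (e • ψ)).Equivalent ψ := by
          rw [smul_smul]
          exact ⟨sqScaleIsom ψ he⟩
        have d2 : (e • ((p * (t * q) * e) • ψ)).Equivalent (t • ψ) := by
          have h1 : e • ((p * (t * q) * e) • ψ) = (e * e) • ((t * q) • (p • ψ)) := by
            rw [smul_smul, smul_smul, smul_smul]
            exact smul_scalar_congr (by ring) _
          rw [h1]
          refine (Equivalent.smul' (e*e) (Equivalent.smul' (t*q) roundp)).trans ?_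
          refine (QuadraticMap.Equivalent.trans ⟨sqScaleIsom _ he⟩ ?_)
          have h2' : (t * q) • ψ = t • (q • ψ) := by rw [smul_smul]
          rw [h2']
          exact Equivalent.smul' t roundq
        refine (Equivalent.smul' e base2).trans ?_ |>.trans base.symm
        rw [smul_prod]
        exact QuadraticMap.Equivalent.prod d1 d2

noncomputable def pfisterZeroIso (a : Fin 0 → F) :
    (pfisterForm F a).IsometryEquiv (sq1 (1:F)) := by
  let equivU : Unit ≃ Finset (Fin 0) := {
    toFun := fun _ => (∅ : Finset (Fin 0))
    invFun := fun _ => ()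
    left_inv := fun _ => rfl
    right_inv := fun S => by
      ext j
      exact j.elim0 }
  have h1 := reindexIsom (F := F) (fun S : Finset (Fin 0) => ∏ i ∈ S, (-a i)) equivU
  have hw : ((fun S : Finset (Fin 0) => ∏ i ∈ S, (-a i)) ∘ equivU)
      = (fun _ : Unit => (1:F)) := by
    funext u
    show ∏ i ∈ (∅ : Finset (Fin 0)), (-a i) = 1
    simp
  rw [hw] at h1
  exact h1.trans (unitIsom _)

lemma not_anisotropic_iff {Q : QuadraticForm F V} :
    ¬ Q.Anisotropic ↔ ∃ x, Q x = 0 ∧ x ≠ 0 := by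
  unfold QuadraticMap.Anisotropic
  push_neg
  rfl

/-- Isotropic Pfister forms are hyperbolic. -/
theorem pfister_isotropic_hyp (h2 : (2:F) ≠ 0) :
    ∀ {m : ℕ} (a : Fin m → F), (∀ i, a i ≠ 0) → ¬ (pfisterForm F a).Anisotropic →
      Hyp (pfisterForm F a) := by
  intro m
  induction m with
  | zero =>
    intro a ha hiso
    exact absurd (anisotropic_of_equivalent ⟨pfisterZeroIso a⟩
      (sq1_anisotropic one_ne_zero)) hiso
  | succ m ih =>
    intro a ha hiso
    have ha' : ∀ i, (fun j => a (Fin.castSucc j)) i ≠ 0 := fun i => ha _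
    set t : F := -a (Fin.last m) with ht
    have htne : t ≠ 0 := neg_ne_zero.mpr (ha _)
    set ψ := pfisterForm F (fun j => a (Fin.castSucc j)) with hψ
    have base : (pfisterForm F a).Equivalent (ψ.prod (t • ψ)) := pfister_succ a
    by_cases han : ψ.Anisotropic
    · have hpiso : ¬ (ψ.prod (t • ψ)).Anisotropic := not_anisotropic_of_equivalent base hiso
      rw [not_anisotropic_iff] at hpiso
      obtain ⟨v, hv0, hvne⟩ := hpiso
      have hsum : ψ v.1 + t * ψ v.2 = 0 := by
        rw [QuadraticMap.prod_apply, QuadraticMap.smul_apply, smul_eq_mul] at hv0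
        exact hv0
      set p := ψ v.1 with hpdef
      have hqne : ψ v.2 ≠ 0 := by
        intro hq0
        have h1 : v.2 = 0 := han _ hq0
        have hp0 : p = 0 := by rw [← hsum, hq0]; ring
        exact hvne (Prod.ext (han _ hp0) h1)
      have hpne : p ≠ 0 := by
        intro hp0
        have h1 : v.1 = 0 := han _ hp0
        have : t * ψ v.2 = 0 := by rw [← hsum, hp0]; ring
        rcases mul_eq_zero.mp this with hh | hh
        · exact htne hh
        · exact hqne hh
      have roundp := pfister_round h2 _ ha' hpne ⟨v.1, rfl⟩
      have roundq := pfister_round h2 _ ha' hqne ⟨v.2, rfl⟩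
      have htq : (t * ψ v.2) = -p := by linear_combination hsum
      have c2 : (t • ψ).Equivalent ((-p) • ψ) := by
        have h1 := (Equivalent.smul' t roundq).symm
        rw [smul_smul] at h1
        rw [smul_scalar_congr htq ψ] at h1
        exact h1
      have big : (pfisterForm F a).Equivalent ((p • ψ).prod ((-p) • ψ)) :=
        base.trans (QuadraticMap.Equivalent.prod roundp.symm c2)
      set w' : Finset (Fin m) → F := fun S => ∏ i ∈ S, (-(fun j => a (Fin.castSucc j)) i)
        with hw'
      have e1 : p • ψ = weightedSumSquares F (fun S => p * w' S) := smul_wSS p w'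
      have e2 : (-p) • ψ = weightedSumSquares F (fun S => -p * w' S) := smul_wSS (-p) w'
      have e3 : (fun S => -p * w' S) = (fun S => -(p * w' S)) := by
        funext S; ring
      have conv1 : ((p • ψ).prod ((-p) • ψ)).Equivalent
          (weightedSumSquares F
            (Sum.elim (fun S => p * w' S) (fun S => -((fun T => p * w' T) S)))) := by
        rw [e1, e2, e3]
        exact QuadraticMap.Equivalent.symm ⟨sumElimIsom _ _⟩
      have hu : ∀ S, (fun S => p * w' S) S ≠ 0 := by
        intro S
        exact mul_ne_zero hpne (pf_coeff_ne _ ha' S)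
      exact hyp_congr (big.trans conv1) (hyp_sum_elim_neg _ hu h2)
    · have Hψ := ih _ ha' han
      exact hyp_congr base (hyp_prod Hψ (hyp_smul Hψ htne h2))


end Pfister

section Main

lemma polar_wSS {ι : Type*} [Fintype ι] (w x y : ι → F) :
    polar (weightedSumSquares F w) x y = ∑ i : ι, 2 * w i * (x i * y i) := by
  simp only [QuadraticMap.polar, wSS_apply]
  rw [← Finset.sum_sub_distrib, ← Finset.sum_sub_distrib]
  apply Finset.sum_congr rfl
  intro i _
  simp only [Pi.add_apply]
  ring

lemma pure_anisotropic {m : ℕ} (a : Fin m → F) (han : (pfisterForm F a).Anisotropic) :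
    (weightedSumSquares F (pfisterPureCoeff F a)).Anisotropic := by
  have hprod := anisotropic_of_equivalent (pfister_pure a).symm han
  intro x hx
  have h0 : ((sq1 (1:F)).prod (weightedSumSquares F (pfisterPureCoeff F a))) (0, x) = 0 := by
    simp [QuadraticMap.prod_apply, hx]
  have h1 := hprod _ h0
  rw [Prod.ext_iff] at h1
  exact h1.2

/-- From an isotropy datum over the quadratic extension, the pure part represents `-c`. -/
theorem pure_represents (h2 : (2:F) ≠ 0) {m : ℕ} (a : Fin m → F)
    (han : (pfisterForm F a).Anisotropic) {cc : F} (hcne : cc ≠ 0)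
    {x y : Finset (Fin m) → F} (hpol : polar (pfisterForm F a) x y = 0)
    (hxq : pfisterForm F a x = -cc * pfisterForm F a y)
    (hyne : pfisterForm F a y ≠ 0) :
    ∃ z, weightedSumSquares F (pfisterPureCoeff F a) z = -cc := by
  set Q := pfisterForm F a with hQ
  set q : F := Q y with hq
  have hxne : Q x ≠ 0 := by
    rw [hxq]
    exact mul_ne_zero (neg_ne_zero.mpr hcne) hyne
  obtain ⟨W, ρ, heqv⟩ := split_two Q h2 hpol hxne hyne
  have round := pfister_round h2 a (a_ne_zero_of_anisotropic han) hyne ⟨y, rfl⟩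
  -- ⟨1⟩ ⊥ pure ≅ Q ≅ q•Q ≅ q•(⟨Qx⟩⊥⟨q⟩⊥ρ)
  have c0 : Q.Equivalent ((q • sq1 (Q x)).prod ((q • sq1 q).prod (q • ρ))) := by
    refine (round.symm.trans (Equivalent.smul' q heqv)).trans ?_
    rw [smul_prod, smul_prod]
    exact QuadraticMap.Equivalent.refl _
  have c1 : (q • sq1 (Q x)).Equivalent (sq1 (-cc)) := by
    have h1 : q • sq1 (Q x) = (q * q) • sq1 (-cc) := by
      rw [smul_sq1, smul_sq1]
      apply sq1_congr
      rw [hxq]; ring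
    rw [h1]
    exact ⟨sqScaleIsom _ hyne⟩
  have c2 : (q • sq1 q).Equivalent (sq1 (1:F)) := by
    have h1 : q • sq1 q = (q * q) • sq1 (1:F) := by
      rw [smul_sq1, smul_sq1]
      apply sq1_congr
      ring
    rw [h1]
    exact ⟨sqScaleIsom _ hyne⟩
  have c3 : Q.Equivalent ((sq1 (-cc)).prod ((sq1 (1:F)).prod (q • ρ))) :=
    c0.trans (QuadraticMap.Equivalent.prod c1 (QuadraticMap.Equivalent.prod c2
      (QuadraticMap.Equivalent.refl _)))
  -- reorder to ⟨1⟩ ⊥ (⟨-cc⟩ ⊥ qρ)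
  have c4 : ((sq1 (-cc)).prod ((sq1 (1:F)).prod (q • ρ))).Equivalent
      ((sq1 (1:F)).prod ((sq1 (-cc)).prod (q • ρ))) := by
    refine QuadraticMap.Equivalent.trans ⟨(prodAssocIsom _ _ _).symm⟩ ?_
    refine QuadraticMap.Equivalent.trans
      (QuadraticMap.Equivalent.prod ⟨QuadraticMap.IsometryEquiv.prodComm _ _⟩
        (QuadraticMap.Equivalent.refl _)) ?_
    exact ⟨prodAssocIsom _ _ _⟩
  have c5 : ((sq1 (1:F)).prod (weightedSumSquares F (pfisterPureCoeff F a))).Equivalent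
      ((sq1 (1:F)).prod ((sq1 (-cc)).prod (q • ρ))) :=
    ((pfister_pure a).symm.trans (c3.trans c4))
  have c6 := cancel_one one_ne_zero h2 c5
  obtain ⟨gg⟩ := c6
  refine ⟨gg.symm (1, 0), ?_⟩
  have := gg.symm.map_app (1, 0)
  rw [this]
  simp [QuadraticMap.prod_apply]

section QuadExt

variable {c : F}

lemma quad_ne_zero : (X^2 - C c : F[X]) ≠ 0 := by
  intro h
  have h1 := congrArg Polynomial.natDegree h
  rw [natDegree_X_pow_sub_C] at h1
  simp at h1

lemma quad_monic : (X^2 - C c : F[X]).Monic := monic_X_pow_sub_C c (by norm_num)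

lemma quad_degree : (X^2 - C c : F[X]).degree = 2 := by
  simpa using degree_X_pow_sub_C (by norm_num : 0 < 2) c

lemma quad_irred (hc : ¬ IsSquare c) : Irreducible (X^2 - C c : F[X]) :=
  X_pow_sub_C_irreducible_of_prime Nat.prime_two
    (fun b hb => hc ⟨b, by rw [← hb]; ring⟩)

lemma root_sq :
    (AdjoinRoot.root (X^2 - C c : F[X])) * (AdjoinRoot.root (X^2 - C c : F[X]))
      = algebraMap F (AdjoinRoot (X^2 - C c : F[X])) c := by
  have h0 := AdjoinRoot.mk_self (f := (X^2 - C c : F[X]))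
  rw [_root_.map_sub, map_pow, AdjoinRoot.mk_X] at h0
  have h1 : AdjoinRoot.mk (X^2 - C c : F[X]) (C c)
      = algebraMap F (AdjoinRoot (X^2 - C c : F[X])) c := by
    rw [AdjoinRoot.mk_C]
    rfl
  rw [h1] at h0
  have := sub_eq_zero.mp h0
  rw [← this]
  ring

lemma quad_decomp (z : AdjoinRoot (X^2 - C c : F[X])) :
    ∃ s t : F, z = algebraMap F _ s + algebraMap F _ t * AdjoinRoot.root _ := by
  obtain ⟨p, rfl⟩ := AdjoinRoot.mk_surjective z
  set f : F[X] := X^2 - C c with hf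
  refine ⟨(p %ₘ f).coeff 0, (p %ₘ f).coeff 1, ?_⟩
  have hmk : AdjoinRoot.mk f p = AdjoinRoot.mk f (p %ₘ f) := by
    rw [AdjoinRoot.mk_eq_mk]
    refine ⟨p /ₘ f, ?_⟩
    have := modByMonic_add_div p f
    linear_combination -this
  have hdeg : (p %ₘ f).degree ≤ 1 := by
    have hlt := degree_modByMonic_lt p (quad_monic (c := c))
    rw [quad_degree] at hlt
    by_cases hq : p %ₘ f = 0
    · rw [hq]
      simp
    · rw [degree_eq_natDegree hq] at hlt ⊢
      have h2' : (p %ₘ f).natDegree < 2 := by exact_mod_cast hlt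
      exact_mod_cast Nat.lt_succ_iff.mp h2'
  have heq := eq_X_add_C_of_degree_le_one hdeg
  have hmk2 : AdjoinRoot.mk f (p %ₘ f) = algebraMap F _ ((p %ₘ f).coeff 0)
      + algebraMap F _ ((p %ₘ f).coeff 1) * AdjoinRoot.root f := by
    conv_lhs => rw [heq]
    rw [map_add, map_mul, AdjoinRoot.mk_X, AdjoinRoot.mk_C, AdjoinRoot.mk_C, add_comm,
      AdjoinRoot.algebraMap_eq]
  rw [hmk, hmk2]

lemma quad_indep {s t : F} (h : algebraMap F (AdjoinRoot (X^2 - C c : F[X])) s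
    + algebraMap F _ t * AdjoinRoot.root _ = 0) : s = 0 ∧ t = 0 := by
  set f : F[X] := X^2 - C c with hf
  have hmk : AdjoinRoot.mk f (C t * X + C s) = 0 := by
    rw [map_add, map_mul, AdjoinRoot.mk_X, AdjoinRoot.mk_C, AdjoinRoot.mk_C]
    rw [AdjoinRoot.algebraMap_eq] at h
    linear_combination h
  rw [AdjoinRoot.mk_eq_zero] at hmk
  have hdeg : (C t * X + C s).degree < f.degree := by
    rw [quad_degree]
    exact lt_of_le_of_lt (degree_linear_le) (by norm_num)
  have h0 : (C t * X + C s : F[X]) = 0 := Polynomial.eq_zero_of_dvd_of_degree_lt hmk hdeg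
  constructor
  · have h1 := congrArg (fun p => Polynomial.coeff p 0) h0
    simpa using h1
  · have h1 := congrArg (fun p => Polynomial.coeff p 1) h0
    simpa using h1

end QuadExt

section Assemble

lemma two_ne_zero'' (hF : ringChar F ≠ 2) : (2:F) ≠ 0 := by
  intro h
  have hd : ringChar F ∣ 2 := by
    rw [← ringChar.spec]
    exact_mod_cast h
  rcases (Nat.dvd_prime Nat.prime_two).mp hd with h1 | h1
  · have : ((1:ℕ) : F) = 0 := (ringChar.spec F 1).mpr (h1 ▸ dvd_refl _)
    simp at this
  · exact hF h1

lemma pf_single_empty {K : Type*} [CommRing K] {m : ℕ} (aK : Fin m → K) :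
    pfisterForm K aK (Pi.single ∅ 1) = 1 := by
  show weightedSumSquares K _ _ = 1
  rw [weightedSumSquares_apply]
  rw [Finset.sum_eq_single (∅ : Finset (Fin m))]
  · simp
  · intro S _ hS
    simp [Pi.single_eq_of_ne hS]
  · simp

lemma wSS_map {K' : Type*} [CommRing K'] (g : F →+* K') {ι : Type*} [Fintype ι]
    (w x : ι → F) :
    weightedSumSquares K' (fun i => g (w i)) (fun i => g (x i))
      = g (weightedSumSquares F w x) := by
  rw [weightedSumSquares_apply, weightedSumSquares_apply, map_sum]
  apply Finset.sum_congr rfl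
  intro i _
  simp only [smul_eq_mul, map_mul]

theorem hyp_gives_pure (h2 : (2:F) ≠ 0) {m : ℕ} {a : Fin m → F}
    (han : (pfisterForm F a).Anisotropic) {c : F} (hc : ¬ IsSquare c)
    (hH : IsHyperbolic (pfisterForm (AdjoinRoot (X^2 - C c : F[X]))
      (fun j => algebraMap F _ (a j)))) :
    ∃ z, weightedSumSquares F (pfisterPureCoeff F a) z = -c := by
  haveI : Fact (Irreducible (X^2 - C c : F[X])) := ⟨quad_irred hc⟩
  have hHyp : Hyp (pfisterForm (AdjoinRoot (X^2 - C c : F[X]))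
      (fun j => algebraMap F _ (a j))) := hH
  have hinj : Function.Injective (algebraMap F (AdjoinRoot (X^2 - C c : F[X]))) := (algebraMap F (AdjoinRoot (X^2 - C c : F[X]))).injective
  have hcne : c ≠ 0 := fun h => hc (h ▸ ⟨0, by ring⟩)
  have h2K : (2 : AdjoinRoot (X^2 - C c : F[X])) ≠ 0 := by
    intro h
    have h3 : algebraMap F (AdjoinRoot (X^2 - C c : F[X])) 2 = algebraMap F (AdjoinRoot (X^2 - C c : F[X])) 0 := by rw [map_ofNat, map_zero]; exact h
    exact h2 (hinj h3)
  have hKan : ¬ (pfisterForm (AdjoinRoot (X^2 - C c : F[X])) (fun j => algebraMap F (AdjoinRoot (X^2 - C c : F[X])) (a j))).Anisotropic := by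
    refine hyp_not_anisotropic hHyp (v₀ := Pi.single ∅ 1) ?_
    rw [pf_single_empty]
    exact one_ne_zero
  rw [not_anisotropic_iff] at hKan
  obtain ⟨v, hv0, hvne⟩ := hKan
  choose xs ys hxy using fun S => quad_decomp (c := c) (v S)
  set w : Finset (Fin m) → F := fun S => ∏ i ∈ S, (-a i) with hw
  have hwK : ∀ S : Finset (Fin m),
      (∏ i ∈ S, (-(algebraMap F (AdjoinRoot (X^2 - C c : F[X])) (a i)))) = algebraMap F (AdjoinRoot (X^2 - C c : F[X])) (w S) := by
    intro S
    rw [hw, map_prod]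
    apply Finset.prod_congr rfl
    intro i _
    rw [_root_.map_neg]
  have hterm : ∀ S : Finset (Fin m), algebraMap F (AdjoinRoot (X^2 - C c : F[X])) (w S) * (v S * v S)
      = algebraMap F (AdjoinRoot (X^2 - C c : F[X])) (w S * (xs S * xs S) + c * (w S * (ys S * ys S)))
        + algebraMap F (AdjoinRoot (X^2 - C c : F[X])) (2 * w S * (xs S * ys S)) * AdjoinRoot.root (X^2 - C c : F[X]) := by
    intro S
    have hr2 := root_sq (c := c)
    rw [hxy S]
    simp only [map_add, map_mul, map_ofNat]
    linear_combination (algebraMap F (AdjoinRoot (X^2 - C c : F[X])) (w S) * algebraMap F (AdjoinRoot (X^2 - C c : F[X])) (ys S)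
      * algebraMap F (AdjoinRoot (X^2 - C c : F[X])) (ys S)) * hr2
  have hKform : pfisterForm (AdjoinRoot (X^2 - C c : F[X])) (fun j => algebraMap F (AdjoinRoot (X^2 - C c : F[X])) (a j)) v
      = algebraMap F (AdjoinRoot (X^2 - C c : F[X])) (pfisterForm F a xs + c * pfisterForm F a ys)
        + algebraMap F (AdjoinRoot (X^2 - C c : F[X])) (∑ S : Finset (Fin m), 2 * w S * (xs S * ys S))
          * AdjoinRoot.root (X^2 - C c : F[X]) := by
    show weightedSumSquares (AdjoinRoot (X^2 - C c : F[X])) _ v = _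
    rw [wSS_apply]
    have h1 : ∑ S : Finset (Fin m), (∏ i ∈ S, (-(algebraMap F (AdjoinRoot (X^2 - C c : F[X])) (a i)))) * (v S * v S)
        = ∑ S : Finset (Fin m),
            (algebraMap F (AdjoinRoot (X^2 - C c : F[X])) (w S * (xs S * xs S) + c * (w S * (ys S * ys S)))
              + algebraMap F (AdjoinRoot (X^2 - C c : F[X])) (2 * w S * (xs S * ys S))
                * AdjoinRoot.root (X^2 - C c : F[X])) := by
      apply Finset.sum_congr rfl
      intro S _
      rw [hwK S, hterm S]
    rw [h1, Finset.sum_add_distrib, ← Finset.sum_mul, ← map_sum, ← map_sum]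
    congr 2
    rw [Finset.sum_add_distrib, ← Finset.mul_sum]
    show _ = weightedSumSquares F w xs + c * weightedSumSquares F w ys
    rw [wSS_apply, wSS_apply]
  have h0 : algebraMap F (AdjoinRoot (X^2 - C c : F[X])) (pfisterForm F a xs + c * pfisterForm F a ys)
      + algebraMap F (AdjoinRoot (X^2 - C c : F[X])) (∑ S : Finset (Fin m), 2 * w S * (xs S * ys S))
        * AdjoinRoot.root (X^2 - C c : F[X]) = 0 := by
    rw [← hKform]
    exact hv0
  obtain ⟨hA, hB⟩ := quad_indep h0
  have hpol : polar (pfisterForm F a) xs ys = 0 := by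
    show polar (weightedSumSquares F w) xs ys = 0
    rw [polar_wSS]
    exact hB
  have hxq : pfisterForm F a xs = -c * pfisterForm F a ys := by linear_combination hA
  have hyne : pfisterForm F a ys ≠ 0 := by
    intro hy0
    have hys : ys = 0 := han _ hy0
    have hx0 : pfisterForm F a xs = 0 := by rw [hxq, hy0]; ring
    have hxs : xs = 0 := han _ hx0
    apply hvne
    funext S
    rw [hxy S, congrFun hxs S, congrFun hys S]
    simp
  exact pure_represents h2 a han hcne hpol hxq hyne

theorem pure_gives_hyp (h2 : (2:F) ≠ 0) {m : ℕ} {a : Fin m → F}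
    (han : (pfisterForm F a).Anisotropic) {c : F} (hc : ¬ IsSquare c)
    {z : {S : Finset (Fin m) // S.Nonempty} → F}
    (hz : weightedSumSquares F (pfisterPureCoeff F a) z = -c) :
    IsHyperbolic (pfisterForm (AdjoinRoot (X^2 - C c : F[X]))
      (fun j => algebraMap F _ (a j))) := by
  haveI : Fact (Irreducible (X^2 - C c : F[X])) := ⟨quad_irred hc⟩
  show Hyp (pfisterForm (AdjoinRoot (X^2 - C c : F[X])) (fun j => algebraMap F _ (a j)))
  have hinj : Function.Injective (algebraMap F (AdjoinRoot (X^2 - C c : F[X]))) := (algebraMap F (AdjoinRoot (X^2 - C c : F[X]))).injective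
  have hcne : c ≠ 0 := fun h => hc (h ▸ ⟨0, by ring⟩)
  have h2K : (2 : AdjoinRoot (X^2 - C c : F[X])) ≠ 0 := by
    intro h
    have h3 : algebraMap F (AdjoinRoot (X^2 - C c : F[X])) 2 = algebraMap F (AdjoinRoot (X^2 - C c : F[X])) 0 := by rw [map_ofNat, map_zero]; exact h
    exact h2 (hinj h3)
  have haK : ∀ i, algebraMap F (AdjoinRoot (X^2 - C c : F[X])) (a i) ≠ 0 := by
    intro i h
    exact a_ne_zero_of_anisotropic han i (hinj (by rw [map_zero]; exact h))
  apply pfister_isotropic_hyp h2K _ haK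
  have hrne : AdjoinRoot.root (X^2 - C c : F[X]) ≠ 0 := by
    intro h
    apply hcne
    apply hinj
    rw [map_zero, ← root_sq (c := c), h, mul_zero]
  have hpc : pfisterPureCoeff (AdjoinRoot (X^2 - C c : F[X])) (fun j => algebraMap F (AdjoinRoot (X^2 - C c : F[X])) (a j))
      = fun S => algebraMap F (AdjoinRoot (X^2 - C c : F[X])) (pfisterPureCoeff F a S) := by
    funext S
    show ∏ i ∈ S.1, (-(algebraMap F (AdjoinRoot (X^2 - C c : F[X])) (a i))) = _
    rw [show pfisterPureCoeff F a S = ∏ i ∈ S.1, (-a i) from rfl, map_prod]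
    apply Finset.prod_congr rfl
    intro i _
    rw [_root_.map_neg]
  have hiso : ¬ ((sq1 (1 : AdjoinRoot (X^2 - C c : F[X]))).prod
      (weightedSumSquares (AdjoinRoot (X^2 - C c : F[X])) (pfisterPureCoeff (AdjoinRoot (X^2 - C c : F[X])) (fun j => algebraMap F (AdjoinRoot (X^2 - C c : F[X])) (a j))))).Anisotropic := by
    rw [not_anisotropic_iff]
    refine ⟨(AdjoinRoot.root (X^2 - C c : F[X]), fun S => algebraMap F (AdjoinRoot (X^2 - C c : F[X])) (z S)), ?_, ?_⟩
    · rw [QuadraticMap.prod_apply, sq1_apply, one_mul, root_sq, hpc, wSS_map, hz, _root_.map_neg]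
      ring
    · intro h
      exact hrne (congrArg Prod.fst h)
  exact not_anisotropic_of_equivalent
    (pfister_pure (fun j => algebraMap F (AdjoinRoot (X^2 - C c : F[X])) (a j))).symm hiso

end Assemble

end Main

end PfAux

/-- anisotropic Pfister forms `φ` (m-fold) and `γ` (n-fold) over a field `F` of
characteristic not 2 share a common quadratic splitting field `F(√c)` if and only if the form
`γ' ⊥ ⟨-1⟩φ'` is isotropic over `F`. -/
theorem pfister_pair_common_quadratic_splitting_iff
    (F : Type*) [Field F] (hF : ringChar F ≠ 2)
    (m n : ℕ) (a : Fin m → F) (b : Fin n → F)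
    (hφ : (pfisterForm F a).Anisotropic) (hγ : (pfisterForm F b).Anisotropic) :
    (∃ c : F, ¬ IsSquare c ∧
        IsHyperbolic (pfisterForm (AdjoinRoot (X ^ 2 - C c : F[X]))
          (fun j => algebraMap F _ (a j))) ∧
        IsHyperbolic (pfisterForm (AdjoinRoot (X ^ 2 - C c : F[X]))
          (fun j => algebraMap F _ (b j)))) ↔
      ¬ (weightedSumSquares F
          (Sum.elim (pfisterPureCoeff F b) (fun S => - pfisterPureCoeff F a S))).Anisotropic := by

  have h2 : (2:F) ≠ 0 := PfAux.two_ne_zero'' hF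
  constructor
  · rintro ⟨c, hc, hH1, hH2⟩
    obtain ⟨za, hza⟩ := PfAux.hyp_gives_pure h2 hφ hc hH1
    obtain ⟨zb, hzb⟩ := PfAux.hyp_gives_pure h2 hγ hc hH2
    rw [PfAux.not_anisotropic_iff]
    refine ⟨Sum.elim zb za, ?_, ?_⟩
    · rw [PfAux.wSS_apply, Fintype.sum_sum_type]
      simp only [Sum.elim_inl, Sum.elim_inr]
      have e2 : ∑ S : {S : Finset (Fin m) // S.Nonempty},
          -pfisterPureCoeff F a S * (za S * za S)
          = - ∑ S : {S : Finset (Fin m) // S.Nonempty},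
              pfisterPureCoeff F a S * (za S * za S) := by
        rw [← Finset.sum_neg_distrib]
        apply Finset.sum_congr rfl
        intro S _
        ring
      rw [e2, ← PfAux.wSS_apply, ← PfAux.wSS_apply, hza, hzb]
      ring
    · intro h
      have hza0 : za = 0 := by
        funext S
        exact congrFun h (Sum.inr S)
      rw [hza0, map_zero] at hza
      exact hc (by rw [show c = 0 by linear_combination hza]; exact ⟨0, by ring⟩)
  · intro hrhs
    rw [PfAux.not_anisotropic_iff] at hrhs
    obtain ⟨u, hu0, hune⟩ := hrhs
    have hbne := PfAux.pure_anisotropic b hγ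
    have hane := PfAux.pure_anisotropic a hφ
    set u₁ : {S : Finset (Fin n) // S.Nonempty} → F := fun S => u (Sum.inl S) with hu₁
    set u₂ : {S : Finset (Fin m) // S.Nonempty} → F := fun S => u (Sum.inr S) with hu₂
    have hsplit : weightedSumSquares F (pfisterPureCoeff F b) u₁
        - weightedSumSquares F (pfisterPureCoeff F a) u₂ = 0 := by
      rw [← hu0, PfAux.wSS_apply, PfAux.wSS_apply, PfAux.wSS_apply, Fintype.sum_sum_type]
      simp only [Sum.elim_inl, Sum.elim_inr]
      rw [sub_eq_add_neg, ← Finset.sum_neg_distrib]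
      congr 1
      apply Finset.sum_congr rfl
      intro S _
      ring
    set e : F := weightedSumSquares F (pfisterPureCoeff F a) u₂ with he
    have heb : weightedSumSquares F (pfisterPureCoeff F b) u₁ = e := by
      linear_combination hsplit
    have hene : e ≠ 0 := by
      intro h0
      have h1 : u₂ = 0 := hane _ (by rw [← he]; exact h0)
      have h2' : u₁ = 0 := hbne _ (by rw [heb]; exact h0)
      apply hune
      funext s
      rcases s with s | s
      · exact congrFun h2' s
      · exact congrFun h1 s
    have hcsq : ¬ IsSquare (-e) := by
      rintro ⟨d, hd⟩
      have hdne : d ≠ 0 := by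
        rintro rfl
        rw [mul_zero] at hd
        exact hene (by linear_combination -hd)
      have hniso : ¬ (pfisterForm F a).Anisotropic := by
        apply PfAux.not_anisotropic_of_equivalent (PfAux.pfister_pure a).symm
        rw [PfAux.not_anisotropic_iff]
        refine ⟨(d, u₂), ?_, ?_⟩
        · rw [QuadraticMap.prod_apply, PfAux.sq1_apply, ← he]
          linear_combination -hd
        · intro h
          exact hdne (congrArg Prod.fst h)
      exact hniso hφ
    have hza : weightedSumSquares F (pfisterPureCoeff F a) u₂ = -(-e) := by
      rw [← he]; ring
    have hzb : weightedSumSquares F (pfisterPureCoeff F b) u₁ = -(-e) := by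
      rw [heb]; ring
    exact ⟨-e, hcsq, PfAux.pure_gives_hyp h2 hφ hcsq hza, PfAux.pure_gives_hyp h2 hγ hcsq hzb⟩
end

section
/- Let F, ℓ, and the ℓ-primary Brauer dimension be as follows: suppose that for every finite extension of F, any finite subset of the ℓ-torsion of the Brauer group can be split by an extension of degree at most C. Then any finite subset of the ℓ^m-torsion of the Brauer group of F can be split by an extension of degree at most C^m. -/
universe u v

variable (F : Type u) [Field F]

/-- An extension `M` of the intermediate extension `L/F`, with `[M:L] ≤ c` (expressed as
`[M:F] ≤ c·[L:F]`), splitting every Brauer class in `S ⊆ Br(L)`. -/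
structure TowerSplit
    (Br : (L : Type u) → [Field L] → [Algebra F L] → AddCommGrpCat.{v})
    (res : (L M : Type u) → [Field L] → [Algebra F L] → [Field M] → [Algebra F M] →
      (L →ₐ[F] M) → (Br L →+ Br M))
    (L : Type u) [Field L] [Algebra F L] (S : Set (Br L)) (c : ℕ) :
    Type (max (u + 1) v) where
  M : Type u
  [fieldM : Field M]
  [algM : Algebra F M]
  emb : L →ₐ[F] M
  finite : FiniteDimensional F M
  deg_le : Module.finrank F M ≤ c * Module.finrank F L
  splits : ∀ α ∈ S, res L M emb α = 0

/-- let `F` be a field and `ℓ` a prime coprime to `char F`.  Suppose that over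
every finite extension `L/F`, any finite subset of the `ℓ`-torsion of the Brauer group `Br(L)`
can be split by an extension of degree at most `C`.  Then any finite subset of the
`ℓ^m`-torsion of `Br(F)` can be split by an extension of degree at most `C^m`. -/
theorem split_ell_power_torsion
    (ℓ : ℕ) (hℓ : ℓ.Prime) (hchar : ℓ.Coprime (ringChar F)) (C m : ℕ)
    (Br : (L : Type u) → [Field L] → [Algebra F L] → AddCommGrpCat.{v})
    (res : (L M : Type u) → [Field L] → [Algebra F L] → [Field M] → [Algebra F M] →
      (L →ₐ[F] M) → (Br L →+ Br M))
    -- functoriality of restriction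
    (res_id : ∀ (L : Type u) [Field L] [Algebra F L] (α : Br L),
      res L L (AlgHom.id F L) α = α)
    (res_comp : ∀ (L M N : Type u) [Field L] [Algebra F L] [Field M] [Algebra F M]
      [Field N] [Algebra F N] (f : L →ₐ[F] M) (g : M →ₐ[F] N) (α : Br L),
      res M N g (res L M f α) = res L N (g.comp f) α)
    -- hypothesis: GBrd_ℓ(F) ≤ C
    (hyp : ∀ (L : Type u) [Field L] [Algebra F L], FiniteDimensional F L →
      ∀ (B : Finset (Br L)), (∀ α ∈ B, ℓ • α = 0) →
        Nonempty (TowerSplit F Br res L (B : Set (Br L)) C))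
    (B : Finset (Br F)) (hB : ∀ α ∈ B, ℓ ^ m • α = 0) :
    Nonempty (TowerSplit F Br res F (B : Set (Br F)) (C ^ m)) := by
  suffices h : ∀ (k : ℕ) (L : Type u) [Field L] [Algebra F L], FiniteDimensional F L →
      ∀ (B : Finset (Br L)), (∀ α ∈ B, ℓ ^ k • α = 0) →
        Nonempty (TowerSplit F Br res L (B : Set (Br L)) (C ^ k)) by
    exact h m F inferInstance B hB
  intro k
  induction k with
  | zero =>
    intro L _ _ _ B hB
    refine ⟨⟨L, AlgHom.id F L, ‹_›, by simp, fun α hα => ?_⟩⟩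
    rw [res_id]
    simpa using hB α hα
  | succ n ih =>
    intro L _ _ hL B hB
    classical
    obtain ⟨T⟩ := hyp L hL (B.image (fun α => ℓ ^ n • α)) (by
      intro β hβ
      rw [Finset.mem_image] at hβ
      obtain ⟨α, hα, rfl⟩ := hβ
      rw [smul_smul, mul_comm, ← pow_succ]
      exact hB α hα)
    letI := T.fieldM
    letI := T.algM
    obtain ⟨T₂⟩ := ih T.M T.finite (B.image (res L T.M T.emb)) (by
      intro β hβ
      rw [Finset.mem_image] at hβ
      obtain ⟨α, hα, rfl⟩ := hβ
      rw [← map_nsmul]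
      exact T.splits (ℓ ^ n • α) (Finset.mem_image_of_mem _ hα))
    letI := T₂.fieldM
    letI := T₂.algM
    refine ⟨⟨T₂.M, T₂.emb.comp T.emb, T₂.finite, ?_, fun α hα => ?_⟩⟩
    · calc Module.finrank F T₂.M ≤ C ^ n * Module.finrank F T.M := T₂.deg_le
        _ ≤ C ^ n * (C * Module.finrank F L) := Nat.mul_le_mul_left _ T.deg_le
        _ = C ^ (n + 1) * Module.finrank F L := by ring
    · rw [← res_comp]
      exact T₂.splits (res L T.M T.emb α) (Finset.mem_image_of_mem _ hα)
end

section
/- Let F be a field of characteristic not 2 whose splitting dimension for function fields of curves over an n-local field satisfies: any finite subset of 2-torsion Brauer classes over any finite extension of F can be split by an extension of degree at most D. Then every even-dimensional quadratic form q over F with trivial discriminant achieves maximal Witt index over an extension of degree at most D. -/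
universe u

section AuxQF


section AuxQF

variable {K : Type*} [Field K]

private lemma conic_lemma (a b x0 x1 x2 : K) (ha : a ≠ 0) (hb : b ≠ 0)
    (hrel : x0 ^ 2 - a * x1 ^ 2 - b * x2 ^ 2 + a * b = 0) :
    ∃ z0 z1 z2 : K, z0 ^ 2 - a * z1 ^ 2 - b * z2 ^ 2 = 0 ∧
      z0 * x0 - a * z1 * x1 - b * z2 * x2 = 0 ∧ ¬(z1 = 0 ∧ z2 = 0) := by
  by_cases h0 : x0 = 0
  · subst h0
    refine ⟨a * b, b * x2, -(a * x1), by linear_combination (a * b) * hrel, by ring, ?_⟩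
    rintro ⟨h1, h2⟩
    have hx2 : x2 = 0 := by
      rcases mul_eq_zero.1 h1 with h | h
      · exact absurd h hb
      · exact h
    have hx1 : x1 = 0 := by
      have h2' : a * x1 = 0 := by simpa using h2
      rcases mul_eq_zero.1 h2' with h | h
      · exact absurd h ha
      · exact h
    rw [hx1, hx2] at hrel
    have : a * b = 0 := by linear_combination hrel
    rcases mul_eq_zero.1 this with h | h
    · exact ha h
    · exact hb h
  · by_cases hd : x0 - x1 * x2 = 0 ∧ x2 ^ 2 - a = 0
    · by_cases he : x1 ^ 2 - b = 0
      · exact ⟨x2, 1, 0, by linear_combination hd.2, by linear_combination x2 * hd.1 + x1 * hd.2,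
          by rintro ⟨h1, -⟩; exact one_ne_zero h1⟩
      · refine ⟨-(a * x1 * (x1 ^ 2 - b)), -(x0 * (x1 ^ 2 - b)), 0, ?_, by ring, ?_⟩
        · linear_combination (-(a * (x1 ^ 2 - b) ^ 2 * (x0 + x1 * x2))) * hd.1 +
            (-(a * (x1 ^ 2 - b) ^ 2 * x1 ^ 2)) * hd.2
        · rintro ⟨h1, -⟩
          rcases mul_eq_zero.1 (neg_eq_zero.1 h1) with h | h
          · exact h0 h
          · exact he h
    · refine ⟨a * x1 * (x0 - x1 * x2) - b * x2 * (x2 ^ 2 - a),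
        x0 * (x0 - x1 * x2), -(x0 * (x2 ^ 2 - a)), ?_, by ring, ?_⟩
      · linear_combination (-(b * x2 ^ 4) - a * x1 ^ 2 * x2 ^ 2 + 2 * a * x0 * x1 * x2
          - a * x0 ^ 2 + a * b * x2 ^ 2) * hrel
      · rintro ⟨h1, h2⟩
        apply hd
        constructor
        · rcases mul_eq_zero.1 h1 with h | h
          · exact absurd h h0
          · exact h
        · rcases mul_eq_zero.1 (neg_eq_zero.1 h2) with h | h
          · exact absurd h h0
          · exact h

private lemma normalize_lemma (h2 : (2 : K) ≠ 0) (a b : K)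
    (x : Fin 4 → K) (hx : x ≠ 0)
    (hrel : x 0 ^ 2 - a * x 1 ^ 2 - b * x 2 ^ 2 + a * b * x 3 ^ 2 = 0) :
    ∃ y0 y1 y2 : K, y0 ^ 2 - a * y1 ^ 2 - b * y2 ^ 2 + a * b = 0 := by
  by_cases h3 : x 3 = 0
  · rw [h3] at hrel
    have hrel3 : x 0 ^ 2 - a * x 1 ^ 2 - b * x 2 ^ 2 = 0 := by linear_combination hrel
    obtain ⟨i, hi⟩ := Function.ne_iff.1 hx
    have hone : x 0 ≠ 0 ∨ x 1 ≠ 0 ∨ x 2 ≠ 0 := by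
      fin_cases i
      · exact Or.inl hi
      · exact Or.inr (Or.inl hi)
      · exact Or.inr (Or.inr hi)
      · exact absurd h3 hi
    rcases hone with h | h | h
    · refine ⟨((-(a * b) - 1) / (2 * x 0)) * x 0 + 1, ((-(a * b) - 1) / (2 * x 0)) * x 1,
        ((-(a * b) - 1) / (2 * x 0)) * x 2, ?_⟩
      have ht : 2 * (((-(a * b) - 1) / (2 * x 0)) * x 0) = -(a * b) - 1 := by
        field_simp
      linear_combination (((-(a * b) - 1) / (2 * x 0)))^2 * hrel3 + ht
    · refine ⟨((a * b - a) / (2 * (a * x 1))) * x 0, ((a * b - a) / (2 * (a * x 1))) * x 1 + 1,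
        ((a * b - a) / (2 * (a * x 1))) * x 2, ?_⟩
      by_cases ha : a = 0
      · subst ha; ring
      have ht : 2 * (((a * b - a) / (2 * (a * x 1))) * (a * x 1)) = a * b - a := by
        field_simp
      linear_combination (((a * b - a) / (2 * (a * x 1))))^2 * hrel3 - ht
    · refine ⟨((a * b - b) / (2 * (b * x 2))) * x 0, ((a * b - b) / (2 * (b * x 2))) * x 1,
        ((a * b - b) / (2 * (b * x 2))) * x 2 + 1, ?_⟩
      by_cases hb : b = 0
      · subst hb; ring
      have ht : 2 * (((a * b - b) / (2 * (b * x 2))) * (b * x 2)) = a * b - b := by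
        field_simp
      linear_combination (((a * b - b) / (2 * (b * x 2))))^2 * hrel3 - ht
  · exact ⟨x 0 / x 3, x 1 / x 3, x 2 / x 3, by field_simp; linear_combination hrel⟩

private def bqf {n : ℕ} (d x y : Fin n → K) : K := ∑ i, d i * x i * y i

private lemma bqf_symm {n : ℕ} (d x y : Fin n → K) : bqf d x y = bqf d y x :=
  Finset.sum_congr rfl fun i _ => by ring

private lemma bqf_add_left {n : ℕ} (d x x' y : Fin n → K) :
    bqf d (x + x') y = bqf d x y + bqf d x' y := by
  unfold bqf
  rw [← Finset.sum_add_distrib]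
  exact Finset.sum_congr rfl fun i _ => by simp only [Pi.add_apply]; ring

private lemma bqf_add_right {n : ℕ} (d x y y' : Fin n → K) :
    bqf d x (y + y') = bqf d x y + bqf d x y' := by
  rw [bqf_symm, bqf_add_left, bqf_symm d y, bqf_symm d y']

private lemma bqf_smul_left {n : ℕ} (d x y : Fin n → K) (t : K) :
    bqf d (t • x) y = t * bqf d x y := by
  unfold bqf
  rw [Finset.mul_sum]
  exact Finset.sum_congr rfl fun i _ => by simp only [Pi.smul_apply, smul_eq_mul]; ring

private lemma bqf_smul_right {n : ℕ} (d x y : Fin n → K) (t : K) :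
    bqf d x (t • y) = t * bqf d x y := by
  rw [bqf_symm, bqf_smul_left, bqf_symm]

private lemma bqf_single_right {n : ℕ} (d x : Fin n → K) (i0 : Fin n) (t : K) :
    bqf d x (Pi.single i0 t) = d i0 * x i0 * t := by
  unfold bqf
  rw [Finset.sum_eq_single i0]
  · rw [Pi.single_eq_same]
  · intro i _ hi
    rw [Pi.single_eq_of_ne hi, mul_zero]
  · intro h; exact absurd (Finset.mem_univ i0) h

private lemma bqf_single_left {n : ℕ} (d x : Fin n → K) (i0 : Fin n) (t : K) :
    bqf d (Pi.single i0 t) x = d i0 * t * x i0 := by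
  rw [bqf_symm, bqf_single_right]; ring

private lemma bqf_sum_left {n : ℕ} {ι : Type*} (d : Fin n → K) (s : Finset ι)
    (f : ι → Fin n → K) (y : Fin n → K) :
    bqf d (∑ j ∈ s, f j) y = ∑ j ∈ s, bqf d (f j) y := by
  unfold bqf
  have h : ∀ i, d i * (∑ j ∈ s, f j) i * y i = ∑ j ∈ s, d i * f j i * y i := fun i => by
    rw [Finset.sum_apply, Finset.mul_sum, Finset.sum_mul]
  simp_rw [h]
  exact Finset.sum_comm

private lemma bqf_sum_zero {n m : ℕ} (d : Fin n → K) (z : Fin m → Fin n → K)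
    (h : ∀ j l, bqf d (z j) (z l) = 0) (lam : Fin m → K) :
    bqf d (∑ j, lam j • z j) (∑ j, lam j • z j) = 0 := by
  rw [bqf_sum_left]
  refine Finset.sum_eq_zero fun j _ => ?_
  rw [bqf_smul_left, bqf_symm, bqf_sum_left]
  refine mul_eq_zero_of_right _ (Finset.sum_eq_zero fun l _ => ?_)
  rw [bqf_smul_left, bqf_symm, h j l, mul_zero]

end AuxQF

/-- An extension `M/L` of degree at most `D` splitting each of the quaternion (2-torsion
Brauer) classes `(aᵢ, bᵢ)`, i.e. making each norm form `⟨1, -aᵢ, -bᵢ, aᵢbᵢ⟩` isotropic. -/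
structure QuatSplitExt (L : Type u) [Field L] (m : ℕ) (a b : Fin m → L) (D : ℕ) where
  M : Type u
  [fieldM : Field M]
  [algM : Algebra L M]
  finite : FiniteDimensional L M
  deg_le : Module.finrank L M ≤ D
  splits : ∀ i, ∃ x : Fin 4 → M, x ≠ 0 ∧
    x 0 ^ 2 - algebraMap L M (a i) * x 1 ^ 2 - algebraMap L M (b i) * x 2 ^ 2 +
      algebraMap L M (a i * b i) * x 3 ^ 2 = 0

/-- A field extension `M/L` of degree at most `d` over which the diagonal form `⟨c₁,…,cₙ⟩`
acquires maximal Witt index `⌊n/2⌋`. -/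
structure SplitExt (L : Type u) [Field L] (n : ℕ) (c : Fin n → L) (d : ℕ) where
  M : Type u
  [fieldM : Field M]
  [algM : Algebra L M]
  finite : FiniteDimensional L M
  deg_le : Module.finrank L M ≤ d
  maxWitt : ∃ W : Submodule M (Fin n → M),
    (∀ x ∈ W, ∑ i, algebraMap L M (c i) * x i ^ 2 = 0) ∧ Module.finrank M W = n / 2

/-- let `F` be a field of characteristic not 2 such that over every finite
extension `L` of `F`, any finite collection of 2-torsion Brauer classes (quaternion classes
`(aᵢ, bᵢ)`) can be split simultaneously by an extension of degree at most `D`.  Then every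
even-dimensional quadratic form over `F` with trivial signed discriminant achieves maximal
Witt index over an extension of degree at most `D`. -/
theorem split_even_form_with_trivial_discriminant
    (F : Type u) [Field F] (hF : ringChar F ≠ 2) (D : ℕ)
    (hyp : ∀ (L : Type u) [Field L] [Algebra F L], FiniteDimensional F L →
      ∀ (m : ℕ) (a b : Fin m → L), (∀ i, a i ≠ 0) → (∀ i, b i ≠ 0) →
        Nonempty (QuatSplitExt L m a b D)) :
    ∀ (k : ℕ) (c : Fin (2 * k) → F), (∀ i, c i ≠ 0) →
      IsSquare ((-1 : F) ^ k * ∏ i, c i) →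
      Nonempty (SplitExt F (2 * k) c D) := by
  intro k c hc hsq
  obtain _ | K' := k
  · -- trivial case k = 0
    obtain ⟨Q⟩ := hyp F inferInstance 0 (fun i => i.elim0) (fun i => i.elim0)
      (fun i => i.elim0) (fun i => i.elim0)
    letI : Field Q.M := Q.fieldM
    letI : Algebra F Q.M := Q.algM
    refine ⟨⟨Q.M, Q.finite, Q.deg_le, ⊥, ?_, ?_⟩⟩
    · intro x hx
      rw [Submodule.mem_bot] at hx
      subst hx
      simp
    · rw [finrank_bot]
  · -- main case k = K' + 1
    -- extend c to ℕ
    set c' : ℕ → F := fun i => if h : i < 2 * (K' + 1) then c ⟨i, h⟩ else 1 with hc'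
    have hc'ne : ∀ i, c' i ≠ 0 := by
      intro i
      rw [hc']
      dsimp only
      split
      · exact hc _
      · exact one_ne_zero
    have hc'eq : ∀ (i : Fin (2 * (K' + 1))), c' i = c i := by
      intro i
      rw [hc']
      dsimp only
      rw [dif_pos i.isLt]
    set f : ℕ → F := fun j => (-1) ^ j * ∏ i ∈ Finset.range (2 * j + 1), c' i with hfdef
    have hf0 : f 0 = c' 0 := by simp [hfdef]
    have hfstep : ∀ j, f (j + 1) = -(f j * c' (2 * j + 1) * c' (2 * j + 2)) := by
      intro j
      rw [hfdef]
      dsimp only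
      rw [show 2 * (j + 1) + 1 = (2 * j + 1) + 1 + 1 by ring, Finset.prod_range_succ,
        Finset.prod_range_succ, pow_succ]
      ring
    have hfne : ∀ j, f j ≠ 0 := fun j =>
      mul_ne_zero (pow_ne_zero _ (neg_ne_zero.mpr one_ne_zero))
        (Finset.prod_ne_zero_iff.mpr fun i _ => hc'ne i)
    set qa : Fin K' → F := fun i => -(f i * c' (2 * i + 1)) with hqa
    set qb : Fin K' → F := fun i => -(f i * c' (2 * i + 2)) with hqb
    obtain ⟨Q⟩ := hyp F inferInstance K' qa qb
      (fun i => by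
        simp only [hqa]
        exact neg_ne_zero.mpr (mul_ne_zero (hfne _) (hc'ne _)))
      (fun i => by
        simp only [hqb]
        exact neg_ne_zero.mpr (mul_ne_zero (hfne _) (hc'ne _)))
    letI : Field Q.M := Q.fieldM
    letI : Algebra F Q.M := Q.algM
    have hφ : Function.Injective (algebraMap F Q.M) := RingHom.injective _
    have hφne : ∀ y : F, y ≠ 0 → algebraMap F Q.M y ≠ 0 := fun y hy h =>
      hy (hφ (by rw [h, map_zero]))
    have h2M : (2 : Q.M) ≠ 0 := by
      have h2F : (2 : F) ≠ 0 := Ring.two_ne_zero hF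
      have : algebraMap F Q.M (2 : F) = (2 : Q.M) := map_ofNat _ 2
      rw [← this]
      exact hφne _ h2F
    set d : Fin (2 * (K' + 1)) → Q.M := fun i => algebraMap F Q.M (c i) with hd
    -- the main induction
    have main : ∀ j, 2 * j + 1 ≤ 2 * (K' + 1) →
        ∃ (z : Fin j → (Fin (2 * (K' + 1)) → Q.M)) (p : Fin (2 * (K' + 1)) → Q.M),
          (∀ i l, bqf d (z i) (z l) = 0) ∧
          (∀ i, bqf d p (z i) = 0) ∧
          bqf d p p = algebraMap F Q.M (f j) ∧
          (∀ l : Fin (2 * (K' + 1)), 2 * j < (l : ℕ) → p l = 0) ∧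
          (∀ i (l : Fin (2 * (K' + 1))), 2 * j < (l : ℕ) → z i l = 0) ∧
          LinearIndependent Q.M z := by
      intro j
      induction j with
      | zero =>
        intro _
        refine ⟨fun i => i.elim0, Pi.single ⟨0, by omega⟩ 1, fun i => i.elim0,
          fun i => i.elim0, ?_, ?_, fun i => i.elim0, linearIndependent_empty_type⟩
        · rw [bqf_single_right, Pi.single_eq_same, hf0, hd]
          dsimp only
          rw [hc'eq ⟨0, by omega⟩]
          ring
        · intro l hl
          apply Pi.single_eq_of_ne
          exact Fin.ne_of_val_ne (show (l : ℕ) ≠ 0 by omega)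
      | succ j ih =>
        intro hj1
        obtain ⟨z, p, hzz, hpz, hpp, hpsupp, hzsupp, hzind⟩ := ih (by omega)
        have hi1lt : 2 * j + 1 < 2 * (K' + 1) := by omega
        have hi2lt : 2 * j + 2 < 2 * (K' + 1) := by omega
        set i1 : Fin (2 * (K' + 1)) := ⟨2 * j + 1, hi1lt⟩ with hi1
        set i2 : Fin (2 * (K' + 1)) := ⟨2 * j + 2, hi2lt⟩ with hi2
        have hvi1 : (i1 : ℕ) = 2 * j + 1 := rfl
        have hvi2 : (i2 : ℕ) = 2 * j + 2 := rfl
        have hne12 : i1 ≠ i2 := Fin.ne_of_val_ne (by omega)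
        have hne21 : i2 ≠ i1 := Fin.ne_of_val_ne (by omega)
        have hjK : j < K' := by omega
        obtain ⟨x, hx0, hxrel⟩ := Q.splits ⟨j, hjK⟩
        set u := algebraMap F Q.M (f j) with hu
        set v := algebraMap F Q.M (c' (2 * j + 1)) with hv
        set w := algebraMap F Q.M (c' (2 * j + 2)) with hw
        have hune : u ≠ 0 := hφne _ (hfne j)
        have hvne : v ≠ 0 := hφne _ (hc'ne _)
        have hwne : w ≠ 0 := hφne _ (hc'ne _)
        have hArw : algebraMap F Q.M (qa ⟨j, hjK⟩) = -(u * v) := by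
          simp only [hqa, hu, hv]
          rw [map_neg, map_mul]
        have hBrw : algebraMap F Q.M (qb ⟨j, hjK⟩) = -(u * w) := by
          simp only [hqb, hu, hw]
          rw [map_neg, map_mul]
        rw [hArw, hBrw, map_mul, hArw, hBrw] at hxrel
        obtain ⟨y0, y1, y2, hy⟩ := normalize_lemma h2M (-(u * v)) (-(u * w)) x hx0 hxrel
        obtain ⟨z0, z1, z2, hziso, hzorth, hznz⟩ := conic_lemma (-(u * v)) (-(u * w)) y0 y1 y2
          (neg_ne_zero.mpr (mul_ne_zero hune hvne)) (neg_ne_zero.mpr (mul_ne_zero hune hwne)) hy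
        set s1 : Fin (2 * (K' + 1)) → Q.M := Pi.single i1 1 with hs1
        set s2 : Fin (2 * (K' + 1)) → Q.M := Pi.single i2 1 with hs2
        have hp_i1 : p i1 = 0 := hpsupp i1 (by rw [hvi1]; omega)
        have hp_i2 : p i2 = 0 := hpsupp i2 (by rw [hvi2]; omega)
        have hz_i1 : ∀ i0, z i0 i1 = 0 := fun i0 => hzsupp i0 i1 (by rw [hvi1]; omega)
        have hz_i2 : ∀ i0, z i0 i2 = 0 := fun i0 => hzsupp i0 i2 (by rw [hvi2]; omega)
        have hd_i1 : d i1 = v := by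
          rw [hd, hv]
          dsimp only
          rw [← hc'eq i1]
        have hd_i2 : d i2 = w := by
          rw [hd, hw]
          dsimp only
          rw [← hc'eq i2]
        have t_p1 : bqf d p s1 = 0 := by rw [hs1, bqf_single_right, hp_i1]; ring
        have t_1p : bqf d s1 p = 0 := by rw [bqf_symm]; exact t_p1
        have t_p2 : bqf d p s2 = 0 := by rw [hs2, bqf_single_right, hp_i2]; ring
        have t_2p : bqf d s2 p = 0 := by rw [bqf_symm]; exact t_p2
        have t_11 : bqf d s1 s1 = v := by
          rw [hs1, bqf_single_right, Pi.single_eq_same, hd_i1]; ring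
        have t_22 : bqf d s2 s2 = w := by
          rw [hs2, bqf_single_right, Pi.single_eq_same, hd_i2]; ring
        have t_12 : bqf d s1 s2 = 0 := by
          rw [hs1, hs2, bqf_single_right, Pi.single_eq_of_ne hne21]; ring
        have t_21 : bqf d s2 s1 = 0 := by rw [bqf_symm]; exact t_12
        have t_1z : ∀ i0, bqf d s1 (z i0) = 0 := fun i0 => by
          rw [hs1, bqf_single_left, hz_i1 i0]; ring
        have t_2z : ∀ i0, bqf d s2 (z i0) = 0 := fun i0 => by
          rw [hs2, bqf_single_left, hz_i2 i0]; ring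
        set Z : Fin (2 * (K' + 1)) → Q.M := z0 • p + (u * z1) • s1 + (u * z2) • s2 with hZ
        set Praw : Fin (2 * (K' + 1)) → Q.M := y0 • p + (u * y1) • s1 + (u * y2) • s2 with hPraw
        set P2 : Fin (2 * (K' + 1)) → Q.M := u⁻¹ • Praw with hP2
        have hZZ0 : bqf d Z Z = 0 := by
          simp only [hZ, bqf_add_left, bqf_add_right, bqf_smul_left, bqf_smul_right, hpp, ← hu,
            t_p1, t_1p, t_p2, t_2p, t_11, t_22, t_12, t_21, mul_zero, add_zero, zero_add]
          linear_combination u * hziso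
        have hZold : ∀ i0, bqf d Z (z i0) = 0 := by
          intro i0
          simp only [hZ, bqf_add_left, bqf_smul_left, hpz, t_1z, t_2z, mul_zero, add_zero]
        have t_Pz : ∀ i0, bqf d P2 (z i0) = 0 := by
          intro i0
          simp only [hP2, hPraw, bqf_smul_left, bqf_add_left, hpz, t_1z, t_2z, mul_zero, add_zero]
        have hPZ : bqf d P2 Z = 0 := by
          simp only [hP2, hPraw, hZ, bqf_smul_left, bqf_add_left, bqf_add_right, bqf_smul_right,
            hpp, ← hu, t_p1, t_1p, t_p2, t_2p, t_11, t_22, t_12, t_21, mul_zero, add_zero,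
            zero_add]
          linear_combination u⁻¹ * u * hzorth
        have hZP : bqf d Z P2 = 0 := by rw [bqf_symm]; exact hPZ
        have hPP : bqf d P2 P2 = algebraMap F Q.M (f (j + 1)) := by
          simp only [hP2, hPraw, bqf_smul_left, bqf_smul_right, bqf_add_left, bqf_add_right,
            hpp, ← hu, t_p1, t_1p, t_p2, t_2p, t_11, t_22, t_12, t_21, mul_zero, add_zero,
            zero_add]
          rw [hfstep j, map_neg, map_mul, map_mul, ← hu, ← hv, ← hw]
          field_simp
          linear_combination hy
        have hZi1 : Z i1 = u * z1 := by
          simp only [hZ, hs1, hs2, Pi.add_apply, Pi.smul_apply, smul_eq_mul, hp_i1,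
            Pi.single_eq_same, Pi.single_eq_of_ne hne12, mul_zero, mul_one, add_zero, zero_add]
        have hZi2 : Z i2 = u * z2 := by
          simp only [hZ, hs1, hs2, Pi.add_apply, Pi.smul_apply, smul_eq_mul, hp_i2,
            Pi.single_eq_same, Pi.single_eq_of_ne hne21, mul_zero, mul_one, add_zero, zero_add]
        have hZsupp : ∀ (l : Fin (2 * (K' + 1))), 2 * (j + 1) < (l : ℕ) → Z l = 0 := by
          intro l hl
          have hl1 : l ≠ i1 := Fin.ne_of_val_ne (by omega)
          have hl2 : l ≠ i2 := Fin.ne_of_val_ne (by omega)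
          simp only [hZ, hs1, hs2, Pi.add_apply, Pi.smul_apply, smul_eq_mul,
            hpsupp l (by omega), Pi.single_eq_of_ne hl1, Pi.single_eq_of_ne hl2,
            mul_zero, add_zero]
        have hPsupp : ∀ (l : Fin (2 * (K' + 1))), 2 * (j + 1) < (l : ℕ) → P2 l = 0 := by
          intro l hl
          have hl1 : l ≠ i1 := Fin.ne_of_val_ne (by omega)
          have hl2 : l ≠ i2 := Fin.ne_of_val_ne (by omega)
          simp only [hP2, hPraw, hs1, hs2, Pi.add_apply, Pi.smul_apply, smul_eq_mul,
            hpsupp l (by omega), Pi.single_eq_of_ne hl1, Pi.single_eq_of_ne hl2,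
            mul_zero, add_zero, zero_add, mul_one]
        have hZnotmem : Z ∉ Submodule.span Q.M (Set.range z) := by
          intro hmem
          have hsub : Submodule.span Q.M (Set.range z) ≤
              LinearMap.ker (LinearMap.proj (R := Q.M) (φ := fun _ : Fin (2 * (K' + 1)) => Q.M) i1) ⊓
              LinearMap.ker (LinearMap.proj (R := Q.M) (φ := fun _ : Fin (2 * (K' + 1)) => Q.M) i2) := by
            rw [Submodule.span_le]
            rintro _ ⟨i0, rfl⟩
            exact ⟨LinearMap.mem_ker.mpr (hz_i1 i0), LinearMap.mem_ker.mpr (hz_i2 i0)⟩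
          have hm := hsub hmem
          rw [Submodule.mem_inf, LinearMap.mem_ker, LinearMap.mem_ker, LinearMap.proj_apply,
            LinearMap.proj_apply] at hm
          obtain ⟨hm1, hm2⟩ := hm
          rw [hZi1] at hm1
          rw [hZi2] at hm2
          exact hznz ⟨by
            rcases mul_eq_zero.1 hm1 with h | h
            · exact absurd h hune
            · exact h, by
            rcases mul_eq_zero.1 hm2 with h | h
            · exact absurd h hune
            · exact h⟩
        have hind : LinearIndependent Q.M (Fin.snoc z Z : Fin (j + 1) → _) :=
          linearIndependent_fin_snoc.mpr ⟨hzind, hZnotmem⟩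
        refine ⟨Fin.snoc z Z, P2, ?_, ?_, hPP, hPsupp, ?_, hind⟩
        · intro i l
          induction i using Fin.lastCases with
          | last =>
            induction l using Fin.lastCases with
            | last => rw [Fin.snoc_last]; exact hZZ0
            | cast l' => rw [Fin.snoc_last, Fin.snoc_castSucc]; exact hZold l'
          | cast i' =>
            induction l using Fin.lastCases with
            | last =>
              rw [Fin.snoc_last, Fin.snoc_castSucc, bqf_symm]
              exact hZold i'
            | cast l' =>
              rw [Fin.snoc_castSucc, Fin.snoc_castSucc]
              exact hzz i' l'
        · intro i
          induction i using Fin.lastCases with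
          | last => rw [Fin.snoc_last]; exact hPZ
          | cast i' => rw [Fin.snoc_castSucc]; exact t_Pz i'
        · intro i l hl
          induction i using Fin.lastCases with
          | last => rw [Fin.snoc_last]; exact hZsupp l hl
          | cast i' =>
            rw [Fin.snoc_castSucc]
            exact hzsupp i' l (by omega)
    -- use the induction up to K', then do the final hyperbolic-pair step
    obtain ⟨z, p, hzz, hpz, hpp, hpsupp, hzsupp, hzind⟩ := main K' (by omega)
    obtain ⟨r, hr⟩ := hsq
    have hrne : r ≠ 0 := by
      intro h
      have hprodne : (-1 : F) ^ (K' + 1) * ∏ i, c i ≠ 0 :=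
        mul_ne_zero (pow_ne_zero _ (neg_ne_zero.mpr one_ne_zero))
          (Finset.prod_ne_zero_iff.mpr fun i _ => hc i)
      rw [hr, h, mul_zero] at hprodne
      exact hprodne rfl
    set ilast : Fin (2 * (K' + 1)) := ⟨2 * K' + 1, by omega⟩ with hilast
    have hvil : (ilast : ℕ) = 2 * K' + 1 := rfl
    have hkey : -(f K' * c' (2 * K' + 1)) = r * r := by
      have hprod : ∏ i ∈ Finset.range (2 * (K' + 1)), c' i = ∏ i, c i := by
        rw [← Fin.prod_univ_eq_prod_range]
        exact Finset.prod_congr rfl fun i _ => hc'eq i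
      calc -(f K' * c' (2 * K' + 1))
          = (-1 : F) ^ (K' + 1) * ∏ i ∈ Finset.range (2 * (K' + 1)), c' i := by
            rw [hfdef]
            dsimp only
            conv_rhs => rw [show 2 * (K' + 1) = (2 * K' + 1) + 1 by ring,
              Finset.prod_range_succ, pow_succ]
            ring
        _ = r * r := by rw [hprod]; exact hr
    set u := algebraMap F Q.M (f K') with hu
    set T := algebraMap F Q.M r with hT
    set Cl := d ilast with hCl
    have hune : u ≠ 0 := hφne _ (hfne K')
    have hTne : T ≠ 0 := hφne _ hrne
    have hClne : Cl ≠ 0 := by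
      rw [hCl, hd]
      exact hφne _ (hc _)
    have hT2 : T * T = -(u * Cl) := by
      rw [hT, hu, hCl, hd]
      dsimp only
      rw [← map_mul, ← hkey, ← hc'eq ilast, map_neg, map_mul]
    set slast : Fin (2 * (K' + 1)) → Q.M := Pi.single ilast 1 with hsl
    have hp_il : p ilast = 0 := hpsupp ilast (by rw [hvil]; omega)
    have hz_il : ∀ i0, z i0 ilast = 0 := fun i0 => hzsupp i0 ilast (by rw [hvil]; omega)
    have t_pl : bqf d p slast = 0 := by rw [hsl, bqf_single_right, hp_il]; ring
    have t_lp : bqf d slast p = 0 := by rw [bqf_symm]; exact t_pl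
    have t_ll : bqf d slast slast = Cl := by
      rw [hsl, bqf_single_right, Pi.single_eq_same, hCl]; ring
    have t_lz : ∀ i0, bqf d slast (z i0) = 0 := fun i0 => by
      rw [hsl, bqf_single_left, hz_il i0]; ring
    set Z : Fin (2 * (K' + 1)) → Q.M := Cl • p + T • slast with hZ
    have hZZ0 : bqf d Z Z = 0 := by
      simp only [hZ, bqf_add_left, bqf_add_right, bqf_smul_left, bqf_smul_right, hpp, ← hu,
        t_pl, t_lp, t_ll, mul_zero, add_zero, zero_add]
      linear_combination Cl * hT2
    have hZold : ∀ i0, bqf d Z (z i0) = 0 := by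
      intro i0
      simp only [hZ, bqf_add_left, bqf_smul_left, hpz, t_lz, mul_zero, add_zero]
    have hZil : Z ilast = T := by
      simp only [hZ, hsl, Pi.add_apply, Pi.smul_apply, smul_eq_mul, hp_il,
        Pi.single_eq_same, mul_zero, mul_one, zero_add]
    have hZnotmem : Z ∉ Submodule.span Q.M (Set.range z) := by
      intro hmem
      have hsub : Submodule.span Q.M (Set.range z) ≤
          LinearMap.ker (LinearMap.proj (R := Q.M) (φ := fun _ : Fin (2 * (K' + 1)) => Q.M) ilast) := by
        rw [Submodule.span_le]
        rintro _ ⟨i0, rfl⟩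
        exact LinearMap.mem_ker.mpr (hz_il i0)
      have hm := hsub hmem
      rw [LinearMap.mem_ker, LinearMap.proj_apply] at hm
      rw [hZil] at hm
      exact hTne hm
    set zf : Fin (K' + 1) → Fin (2 * (K' + 1)) → Q.M := Fin.snoc z Z with hzf
    have hind : LinearIndependent Q.M zf := by
      rw [hzf]
      exact linearIndependent_fin_snoc.mpr ⟨hzind, hZnotmem⟩
    have hfpairs : ∀ i l, bqf d (zf i) (zf l) = 0 := by
      intro i l
      simp only [hzf]
      induction i using Fin.lastCases with
      | last =>
        induction l using Fin.lastCases with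
        | last => rw [Fin.snoc_last]; exact hZZ0
        | cast l' => rw [Fin.snoc_last, Fin.snoc_castSucc]; exact hZold l'
      | cast i' =>
        induction l using Fin.lastCases with
        | last =>
          rw [Fin.snoc_last, Fin.snoc_castSucc, bqf_symm]
          exact hZold i'
        | cast l' =>
          rw [Fin.snoc_castSucc, Fin.snoc_castSucc]
          exact hzz i' l'
    refine ⟨⟨Q.M, Q.finite, Q.deg_le,
      Submodule.span Q.M (Set.range zf), ?_, ?_⟩⟩
    · intro x hx
      rw [Submodule.mem_span_range_iff_exists_fun] at hx
      obtain ⟨lam, hlam⟩ := hx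
      rw [← hlam]
      refine Eq.trans (Finset.sum_congr rfl fun i _ => ?_) (bqf_sum_zero d _ hfpairs lam)
      rw [hd]
      dsimp only
      ring
    · rw [finrank_span_eq_card hind, Fintype.card_fin]
      omega
end AuxQF
end
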